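/- arXiv:1312.6432 — 4 statements merged into one kernel-verified Lean document; each statement's English description precedes it below -/
import Mathlib

section
/- The i-SIR kernel P_N is reversible with respect to π, i.e. ∫_A P_N(x,B) π(dx) = ∫_B P_N(x,A) π(dx) for all measurable A, B ⊆ X, and it is a positive operator on L²(X,π), i.e. ∫_X f(x) (∫_X f(y) P_N(x,dy)) π(dx) ≥ 0 for every f ∈ L²(X,π). -/
open MeasureTheory
open scoped ENNReal

/-- The full particle vector: `z¹ = x` and `z² , …, z^N` given by `y`, where `N = n + 2`. -/
def isirVec {X : Type*} (n : ℕ) (x : X) (y : Fin (n + 1) → X) : Fin (n + 2) → X :=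
  Fin.cons x y

/-- The i-SIR kernel with `N = n + 2` particles: starting from `x`, draw `n + 1` fresh
particles i.i.d. from `M`, set `z¹ = x`, and select particle `z^k` with probability
proportional to `G(z^k)` (with the convention `0/0 = 0`). -/
noncomputable def isirKernel {X : Type*} [MeasurableSpace X]
    (M : Measure X) (G : X → ℝ) (n : ℕ) (x : X) : Measure X :=
  ∑ k : Fin (n + 2),
    Measure.map (fun y : Fin (n + 1) → X => isirVec n x y k)
      ((Measure.pi fun _ : Fin (n + 1) => M).withDensity
        (fun y => ENNReal.ofReal
          (G (isirVec n x y k) / ∑ j : Fin (n + 2), G (isirVec n x y j))))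

namespace IsirAux

variable {X : Type*} [MeasurableSpace X]

lemma measurable_S {G : X → ℝ} (hG : Measurable G) (n : ℕ) :
    Measurable (fun z : Fin (n + 2) → X => ∑ j, G (z j)) :=
  Finset.measurable_sum _ fun j _ => hG.comp (measurable_pi_apply j)

lemma measurable_finCons {m : ℕ} :
    Measurable (fun p : X × (Fin m → X) => (Fin.cons p.1 p.2 : Fin (m + 1) → X)) := by
  rw [measurable_pi_iff]
  intro i
  refine Fin.cases ?_ ?_ i
  · simpa using measurable_fst
  · intro j
    simpa [Function.comp_def] using (measurable_pi_apply j).comp measurable_snd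

lemma mp_perm {m : ℕ} (M : Measure X) [IsProbabilityMeasure M] (σ : Equiv.Perm (Fin m)) :
    MeasurePreserving (fun z : Fin m → X => fun i => z (σ i))
      (Measure.pi fun _ => M) (Measure.pi fun _ => M) := by
  have h := measurePreserving_piCongrLeft (fun _ : Fin m => M) σ.symm
  have hcoe : ⇑(MeasurableEquiv.piCongrLeft (fun _ : Fin m => X) σ.symm)
      = fun z : Fin m → X => fun i => z (σ i) := by
    funext z i
    rw [MeasurableEquiv.coe_piCongrLeft]
    have := Equiv.piCongrLeft_apply_apply (P := fun _ : Fin m => X) σ.symm z (σ i)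
    simpa using this
  rwa [hcoe] at h

lemma mp_cons (M : Measure X) [IsProbabilityMeasure M] (n : ℕ) :
    MeasurePreserving (fun p : X × (Fin (n + 1) → X) => (Fin.cons p.1 p.2 : Fin (n + 2) → X))
      (M.prod (Measure.pi fun _ : Fin (n + 1) => M)) (Measure.pi fun _ : Fin (n + 2) => M) := by
  have h := (measurePreserving_piFinSuccAbove (fun _ : Fin (n + 2) => M) 0).symm
  have hcoe : ⇑(MeasurableEquiv.piFinSuccAbove (fun _ : Fin (n + 2) => X) 0).symm
      = fun p : X × (Fin (n + 1) → X) => (Fin.cons p.1 p.2 : Fin (n + 2) → X) := by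
    funext p
    simp [MeasurableEquiv.piFinSuccAbove, Fin.insertNth_zero', Fin.consEquiv]
  rwa [hcoe] at h

lemma mp_eval {m : ℕ} (M : Measure X) [IsProbabilityMeasure M] (i : Fin m) :
    MeasurePreserving (fun z : Fin m → X => z i) (Measure.pi fun _ => M) M := by
  refine ⟨measurable_pi_apply i, ?_⟩
  ext s hs
  rw [Measure.map_apply (measurable_pi_apply i) hs]
  have hpre : (fun z : Fin m → X => z i) ⁻¹' s
      = Set.pi Set.univ (Function.update (fun _ => (Set.univ : Set X)) i s) :=
    Set.eval_preimage
  rw [hpre, Measure.pi_pi]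
  have : ∀ j, M (Function.update (fun _ => (Set.univ : Set X)) i s j)
      = Function.update (fun _ => (1 : ℝ≥0∞)) i (M s) j := by
    intro j
    rcases eq_or_ne j i with rfl | hj
    · simp
    · simp [Function.update_of_ne hj]
  simp only [this]
  rw [Finset.prod_update_of_mem (Finset.mem_univ i)]
  simp

section Kernel

variable (M : Measure X) [IsProbabilityMeasure M] {G : X → ℝ} (n : ℕ)

lemma measurable_consx (x : X) :
    Measurable (fun y : Fin (n + 1) → X => isirVec n x y) :=
  measurable_finCons.comp (measurable_const.prodMk measurable_id)

lemma isirKernel_apply (hG : Measurable G) (x : X) {B : Set X} (hB : MeasurableSet B) :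
    isirKernel M G n x B = ∑ k : Fin (n + 2),
      ∫⁻ y, B.indicator (fun _ => (1 : ℝ≥0∞)) (isirVec n x y k)
        * ENNReal.ofReal (G (isirVec n x y k) / ∑ j, G (isirVec n x y j))
        ∂(Measure.pi fun _ : Fin (n + 1) => M) := by
  rw [isirKernel]
  rw [Measure.finset_sum_apply]
  refine Finset.sum_congr rfl fun k _ => ?_
  have hck : Measurable (fun y : Fin (n + 1) → X => isirVec n x y k) :=
    (measurable_pi_apply k).comp (measurable_consx n x)
  rw [Measure.map_apply hck hB, withDensity_apply _ (hck hB)]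
  rw [← lintegral_indicator (hck hB)]
  refine lintegral_congr fun y => ?_
  by_cases h : isirVec n x y k ∈ B
  · simp [Set.indicator_of_mem, h, Set.mem_preimage]
  · simp [Set.indicator_of_notMem, h,
      Set.indicator_of_notMem (fun hc => h (Set.mem_preimage.1 hc))]


end Kernel

variable {M : Measure X} [IsProbabilityMeasure M] {G : X → ℝ} {n : ℕ}

/-- The integrand on the full product space appearing in the reversibility identity. -/
noncomputable def revInt (G : X → ℝ) (n : ℕ) (A B : Set X) (k : Fin (n + 2)) (z : Fin (n + 2) → X) : ℝ≥0∞ :=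
  (A.indicator (fun _ => (1 : ℝ≥0∞)) (z 0) * B.indicator (fun _ => (1 : ℝ≥0∞)) (z k)) *
    (ENNReal.ofReal (G (z 0)) * ENNReal.ofReal (G (z k) / ∑ j, G (z j)))

lemma measurable_revInt (hG : Measurable G) {A B : Set X} (hA : MeasurableSet A)
    (hB : MeasurableSet B) (k : Fin (n + 2)) : Measurable (revInt G n A B k) := by
  refine Measurable.mul (Measurable.mul ?_ ?_) (Measurable.fun_mul ?_ ?_)
  · exact (measurable_const.indicator hA).comp (measurable_pi_apply 0)
  · exact (measurable_const.indicator hB).comp (measurable_pi_apply k)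
  · exact ENNReal.measurable_ofReal.comp (hG.comp (measurable_pi_apply 0))
  · exact ENNReal.measurable_ofReal.comp
      ((hG.comp (measurable_pi_apply k)).div (measurable_S hG n))

lemma measurable_kernel_apply (hG : Measurable G) {B : Set X} (hB : MeasurableSet B) :
    Measurable fun x => isirKernel M G n x B := by
  have h : (fun x => isirKernel M G n x B) = fun x => ∑ k : Fin (n + 2),
      ∫⁻ y, B.indicator (fun _ => (1 : ℝ≥0∞)) (isirVec n x y k)
        * ENNReal.ofReal (G (isirVec n x y k) / ∑ j, G (isirVec n x y j))
        ∂(Measure.pi fun _ : Fin (n + 1) => M) := by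
    funext x; exact isirKernel_apply M n hG x hB
  rw [h]
  refine Finset.measurable_sum _ fun k _ => ?_
  refine Measurable.lintegral_prod_right' (f := fun p : X × (Fin (n + 1) → X) =>
    B.indicator (fun _ => (1 : ℝ≥0∞)) (isirVec n p.1 p.2 k)
      * ENNReal.ofReal (G (isirVec n p.1 p.2 k) / ∑ j, G (isirVec n p.1 p.2 j))) ?_
  have hconsP : Measurable (fun p : X × (Fin (n + 1) → X) => isirVec n p.1 p.2) :=
    measurable_finCons
  exact (((measurable_const.indicator hB).comp (measurable_pi_apply k)).comp hconsP).mul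
    ((ENNReal.measurable_ofReal.comp ((hG.comp (measurable_pi_apply k)).div
      (measurable_S hG n))).comp hconsP)

lemma lintegral_isir (π : Measure X) (hG : Measurable G)
    (hπ : π = M.withDensity fun x => ENNReal.ofReal (G x))
    {A B : Set X} (hA : MeasurableSet A) (hB : MeasurableSet B) :
    ∫⁻ x in A, isirKernel M G n x B ∂π
      = ∑ k : Fin (n + 2), ∫⁻ z, revInt G n A B k z ∂(Measure.pi fun _ : Fin (n + 2) => M) := by
  have hΦ : ∀ k, Measurable (revInt G n A B k) := fun k => measurable_revInt hG hA hB k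
  have hconsP : Measurable (fun p : X × (Fin (n + 1) → X) => isirVec n p.1 p.2) :=
    measurable_finCons
  have hΘ : ∀ k : Fin (n + 2),
      Measurable fun p : X × (Fin (n + 1) → X) => revInt G n A B k (isirVec n p.1 p.2) :=
    fun k => (hΦ k).comp hconsP
  calc ∫⁻ x in A, isirKernel M G n x B ∂π
      = ∫⁻ x in A, ENNReal.ofReal (G x) * isirKernel M G n x B ∂M := by
        rw [hπ]
        have hf : Measurable fun x => ENNReal.ofReal (G x) := ENNReal.measurable_ofReal.comp hG
        rw [setLIntegral_withDensity_eq_setLIntegral_mul M hf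
          (measurable_kernel_apply hG hB) hA]
        rfl
    _ = ∫⁻ x, A.indicator (fun x => ENNReal.ofReal (G x) * isirKernel M G n x B) x ∂M :=
        (lintegral_indicator hA _).symm
    _ = ∫⁻ x, ∑ k : Fin (n + 2),
          ∫⁻ y, revInt G n A B k (isirVec n x y) ∂(Measure.pi fun _ : Fin (n + 1) => M) ∂M := by
        refine lintegral_congr fun x => ?_
        classical
        rw [Set.indicator_apply]
        by_cases hx : x ∈ A
        · simp only [hx, if_true]
          rw [isirKernel_apply M n hG x hB, Finset.mul_sum]
          refine Finset.sum_congr rfl fun k _ => ?_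
          have hint : Measurable fun y : Fin (n + 1) → X =>
              B.indicator (fun _ => (1 : ℝ≥0∞)) (isirVec n x y k)
                * ENNReal.ofReal (G (isirVec n x y k) / ∑ j, G (isirVec n x y j)) :=
            (((measurable_const.indicator hB).comp
              ((measurable_pi_apply k).comp (measurable_consx n x))).mul
              (ENNReal.measurable_ofReal.comp ((hG.comp ((measurable_pi_apply k).comp
                (measurable_consx n x))).div ((measurable_S hG n).comp
                  (measurable_consx n x)))))
          rw [← lintegral_const_mul _ hint]
          refine lintegral_congr fun y => ?_
          have h0 : isirVec n x y 0 = x := rfl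
          have hxA : A.indicator (fun _ => (1 : ℝ≥0∞)) (isirVec n x y 0) = 1 := by
            rw [h0]; exact Set.indicator_of_mem hx _
          rw [revInt, hxA, h0]
          ring
        · simp only [hx, if_false]
          symm
          refine Finset.sum_eq_zero fun k _ => ?_
          rw [← lintegral_zero]
          refine lintegral_congr fun y => ?_
          have hxA : A.indicator (fun _ => (1 : ℝ≥0∞)) (isirVec n x y 0) = 0 := by
            have h0 : isirVec n x y 0 = x := rfl
            rw [h0]; exact Set.indicator_of_notMem hx _
          rw [revInt, hxA]
          simp
    _ = ∑ k : Fin (n + 2),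
          ∫⁻ x, ∫⁻ y, revInt G n A B k (isirVec n x y)
            ∂(Measure.pi fun _ : Fin (n + 1) => M) ∂M := by
        rw [lintegral_finset_sum]
        exact fun k _ => Measurable.lintegral_prod_right' (hΘ k)
    _ = ∑ k : Fin (n + 2), ∫⁻ z, revInt G n A B k z ∂(Measure.pi fun _ : Fin (n + 2) => M) := by
        refine Finset.sum_congr rfl fun k _ => ?_
        rw [← lintegral_prod _ (hΘ k).aemeasurable]
        exact (mp_cons M n).lintegral_comp (hΦ k)

lemma lintegral_revInt_symm (hG : Measurable G) (hGnonneg : ∀ x, 0 ≤ G x)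
    {A B : Set X} (hA : MeasurableSet A) (hB : MeasurableSet B) (k : Fin (n + 2)) :
    ∫⁻ z, revInt G n A B k z ∂(Measure.pi fun _ : Fin (n + 2) => M)
      = ∫⁻ z, revInt G n B A k z ∂(Measure.pi fun _ : Fin (n + 2) => M) := by
  rcases eq_or_ne k 0 with rfl | hk
  · refine lintegral_congr fun z => ?_
    rw [revInt, revInt]
    ring
  · have hσ := (mp_perm M (Equiv.swap (0 : Fin (n + 2)) k)).lintegral_comp
      (measurable_revInt hG hB hA k)
    rw [← hσ]
    refine lintegral_congr fun z => ?_
    simp only [revInt]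
    rw [Equiv.swap_apply_left, Equiv.swap_apply_right,
      Equiv.sum_comp (Equiv.swap (0 : Fin (n + 2)) k) (fun j => G (z j)),
      ← ENNReal.ofReal_mul (hGnonneg (z k)), ← ENNReal.ofReal_mul (hGnonneg (z 0))]
    have harg : G (z 0) * (G (z k) / ∑ j, G (z j)) = G (z k) * (G (z 0) / ∑ j, G (z j)) := by
      ring
    rw [harg]
    ring


/-- Pointwise bound used repeatedly: `g a * g b / ∑ g ≤ g a` for nonnegative `g`. -/
lemma div_sum_le {m : ℕ} (g : Fin m → ℝ) (hg : ∀ j, 0 ≤ g j) (a b : Fin m) :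
    g a * g b / (∑ j, g j) ≤ g a := by
  rcases le_or_gt (∑ j, g j) 0 with h | h
  · have hs : ∑ j, g j = 0 := le_antisymm h (Finset.sum_nonneg fun j _ => hg j)
    have hb : g b = 0 :=
      (Finset.sum_eq_zero_iff_of_nonneg (fun j _ => hg j)).1 hs b (Finset.mem_univ b)
    simp [hs, hb, hg a]
  · rw [div_le_iff₀ h]
    have hb : g b ≤ ∑ j, g j := Finset.single_le_sum (fun j _ => hg j) (Finset.mem_univ b)
    calc g a * g b ≤ g a * ∑ j, g j := mul_le_mul_of_nonneg_left hb (hg a)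
      _ = g a * ∑ j, g j := rfl

/-- The symmetric bilinear integrand on the product space. -/
noncomputable def tInt (f G : X → ℝ) (n : ℕ) (a b : Fin (n + 2)) (z : Fin (n + 2) → X) : ℝ :=
  (f (z a) * f (z b)) * (G (z a) * G (z b) / ∑ j, G (z j))

lemma tInt_abs_le {f G : X → ℝ} (hGnonneg : ∀ x, 0 ≤ G x) {n : ℕ} (a b : Fin (n + 2))
    (z : Fin (n + 2) → X) :
    |tInt f G n a b z| ≤ f (z a) ^ 2 * G (z a) + f (z b) ^ 2 * G (z b) := by
  set p := f (z a); set q := f (z b)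
  set r := G (z a) * G (z b) / ∑ j, G (z j) with hrdef
  have hr : 0 ≤ r := div_nonneg (mul_nonneg (hGnonneg _) (hGnonneg _))
    (Finset.sum_nonneg fun j _ => hGnonneg _)
  have hra : r ≤ G (z a) := div_sum_le (fun j => G (z j)) (fun j => hGnonneg _) a b
  have hrb : r ≤ G (z b) := by
    have := div_sum_le (fun j => G (z j)) (fun j => hGnonneg _) b a
    calc r = G (z b) * G (z a) / ∑ j, G (z j) := by rw [hrdef]; ring_nf
      _ ≤ G (z b) := this
  have h1 : |tInt f G n a b z| = |p * q| * r := by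
    rw [tInt, abs_mul, abs_of_nonneg hr]
  have habs : |p * q| ≤ (p ^ 2 + q ^ 2) / 2 := by
    rw [abs_mul]
    nlinarith [sq_nonneg (|p| - |q|), sq_abs p, sq_abs q, abs_nonneg p, abs_nonneg q]
  rw [h1]
  calc |p * q| * r ≤ ((p ^ 2 + q ^ 2) / 2) * r := mul_le_mul_of_nonneg_right habs hr
    _ = p ^ 2 * r / 2 + q ^ 2 * r / 2 := by ring
    _ ≤ p ^ 2 * G (z a) / 2 + q ^ 2 * G (z b) / 2 := by gcongr <;> positivity
    _ ≤ p ^ 2 * G (z a) + q ^ 2 * G (z b) := by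
        nlinarith [mul_nonneg (sq_nonneg p) (hGnonneg (z a)),
          mul_nonneg (sq_nonneg q) (hGnonneg (z b))]

lemma measurable_tInt {f G : X → ℝ} (hf : Measurable f) (hG : Measurable G) {n : ℕ}
    (a b : Fin (n + 2)) : Measurable (tInt f G n a b) := by
  refine Measurable.mul (Measurable.mul ?_ ?_) (Measurable.div (Measurable.mul ?_ ?_) ?_)
  · exact hf.comp (measurable_pi_apply a)
  · exact hf.comp (measurable_pi_apply b)
  · exact hG.comp (measurable_pi_apply a)
  · exact hG.comp (measurable_pi_apply b)
  · exact Finset.measurable_sum _ fun j _ => hG.comp (measurable_pi_apply j)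


lemma perm_coe {m : ℕ} (σ : Equiv.Perm (Fin m)) :
    ⇑(MeasurableEquiv.piCongrLeft (fun _ : Fin m => X) σ.symm)
      = fun z : Fin m → X => fun i => z (σ i) := by
  funext z i
  rw [MeasurableEquiv.coe_piCongrLeft]
  have := Equiv.piCongrLeft_apply_apply (P := fun _ : Fin m => X) σ.symm z (σ i)
  simpa using this

lemma me_perm {m : ℕ} (σ : Equiv.Perm (Fin m)) :
    MeasurableEmbedding (fun z : Fin m → X => fun i => z (σ i)) := by
  have := (MeasurableEquiv.piCongrLeft (fun _ : Fin m => X) σ.symm).measurableEmbedding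
  rwa [perm_coe σ] at this

lemma me_cons (n : ℕ) :
    MeasurableEmbedding (fun p : X × (Fin (n + 1) → X) => (Fin.cons p.1 p.2 : Fin (n + 2) → X)) := by
  have := (MeasurableEquiv.piFinSuccAbove (fun _ : Fin (n + 2) => X) 0).symm.measurableEmbedding
  have hcoe : ⇑(MeasurableEquiv.piFinSuccAbove (fun _ : Fin (n + 2) => X) 0).symm
      = fun p : X × (Fin (n + 1) → X) => (Fin.cons p.1 p.2 : Fin (n + 2) → X) := by
    funext p
    simp [MeasurableEquiv.piFinSuccAbove, Fin.insertNth_zero', Fin.consEquiv]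
  rwa [hcoe] at this

lemma integral_withDensity_ofReal {α : Type*} [MeasurableSpace α] (μ : Measure α) {w : α → ℝ}
    (hw : Measurable w) (hwnonneg : ∀ y, 0 ≤ w y) (h : α → ℝ) :
    ∫ y, h y ∂(μ.withDensity fun y => ENNReal.ofReal (w y)) = ∫ y, w y * h y ∂μ := by
  have hm : Measurable fun y => Real.toNNReal (w y) := measurable_real_toNNReal.comp hw
  have hrepr : (fun y => ENNReal.ofReal (w y)) = fun y => ((w y).toNNReal : ℝ≥0∞) :=
    rfl
  rw [hrepr, integral_withDensity_eq_integral_smul hm h]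
  refine integral_congr_ae (Filter.Eventually.of_forall fun y => ?_)
  simp [NNReal.smul_def, Real.coe_toNNReal _ (hwnonneg y)]

lemma integrable_withDensity_ofReal_iff {α : Type*} [MeasurableSpace α] {μ : Measure α}
    {w : α → ℝ} (hw : Measurable w) (hwnonneg : ∀ y, 0 ≤ w y) {h : α → ℝ} :
    Integrable h (μ.withDensity fun y => ENNReal.ofReal (w y))
      ↔ Integrable (fun y => h y * w y) μ := by
  have hm : Measurable fun y => ENNReal.ofReal (w y) := ENNReal.measurable_ofReal.comp hw
  rw [integrable_withDensity_iff hm (ae_of_all _ fun y => ENNReal.ofReal_lt_top)]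
  exact integrable_congr (Filter.Eventually.of_forall fun y => by
    simp [ENNReal.toReal_ofReal (hwnonneg y)])

section Pos

variable {M : Measure X} [IsProbabilityMeasure M] {f G : X → ℝ} {n : ℕ}

lemma integrable_tInt (hf : Measurable f) (hG : Measurable G) (hGnonneg : ∀ x, 0 ≤ G x)
    (h2 : Integrable (fun x => f x ^ 2 * G x) M) (a b : Fin (n + 2)) :
    Integrable (tInt f G n a b) (Measure.pi fun _ : Fin (n + 2) => M) := by
  have hev : ∀ c : Fin (n + 2), Integrable (fun z : Fin (n + 2) → X => f (z c) ^ 2 * G (z c))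
      (Measure.pi fun _ : Fin (n + 2) => M) := fun c =>
    ((mp_eval M c).integrable_comp h2.aestronglyMeasurable).2 h2
  refine Integrable.mono' ((hev a).add (hev b))
    ((measurable_tInt hf hG a b).aestronglyMeasurable) (ae_of_all _ fun z => ?_)
  have h := tInt_abs_le (f := f) hGnonneg a b z
  simpa [Real.norm_eq_abs] using h

lemma integral_tInt_perm (σ : Equiv.Perm (Fin (n + 2))) (a b : Fin (n + 2)) :
    ∫ z, tInt f G n (σ a) (σ b) z ∂(Measure.pi fun _ : Fin (n + 2) => M)
      = ∫ z, tInt f G n a b z ∂(Measure.pi fun _ : Fin (n + 2) => M) := by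
  rw [← (mp_perm M σ).integral_comp (me_perm σ) (tInt f G n a b)]
  refine integral_congr_ae (Filter.Eventually.of_forall fun z => ?_)
  simp only [tInt]
  rw [Equiv.sum_comp σ (fun j => G (z j))]

lemma isir_positive (π : Measure X) [IsProbabilityMeasure π] (hG : Measurable G)
    (hGnonneg : ∀ x, 0 ≤ G x)
    (hπ : π = M.withDensity fun x => ENNReal.ofReal (G x))
    (hf : Measurable f) (hf2 : MemLp f 2 π) :
    0 ≤ ∫ x, f x * ∫ y, f y ∂(isirKernel M G n x) ∂π := by
  have hsumnn : ∀ z : Fin (n + 2) → X, (0 : ℝ) ≤ ∑ j, G (z j) :=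
    fun z => Finset.sum_nonneg fun j _ => hGnonneg _
  -- integrability transfers
  have hfI : Integrable f π := hf2.integrable one_le_two
  have hf2I : Integrable (fun x => f x ^ 2) π := hf2.integrable_sq
  have hfG : Integrable (fun x => f x * G x) M :=
    (integrable_withDensity_ofReal_iff hG hGnonneg).1 (hπ ▸ hfI)
  have hf2G : Integrable (fun x => f x ^ 2 * G x) M :=
    (integrable_withDensity_ofReal_iff hG hGnonneg).1 (hπ ▸ hf2I)
  have habsfG : Integrable (fun x => |f x| * G x) M :=
    (integrable_withDensity_ofReal_iff hG hGnonneg).1 (hπ ▸ hfI.abs)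
  -- weights
  have hwmeas : ∀ (x : X) (k : Fin (n + 2)), Measurable fun y : Fin (n + 1) → X =>
      G (isirVec n x y k) / ∑ j, G (isirVec n x y j) := fun x k =>
    (hG.comp ((measurable_pi_apply k).comp (measurable_consx n x))).div
      ((measurable_S hG n).comp (measurable_consx n x))
  have hwnonneg : ∀ (x : X) (y : Fin (n + 1) → X) (k : Fin (n + 2)),
      0 ≤ G (isirVec n x y k) / ∑ j, G (isirVec n x y j) := fun x y k =>
    div_nonneg (hGnonneg _) (Finset.sum_nonneg fun j _ => hGnonneg _)
  have hSx : ∀ (x : X) (y : Fin (n + 1) → X), G x ≤ ∑ j, G (isirVec n x y j) := by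
    intro x y
    have := Finset.single_le_sum (f := fun j => G (isirVec n x y j))
      (fun j _ => hGnonneg _) (Finset.mem_univ (0 : Fin (n + 2)))
    simpa [isirVec] using this
  -- integrability of the weighted component integrands, for `G x > 0`
  have hcompInt : ∀ (x : X), 0 < G x → ∀ k : Fin (n + 2),
      Integrable (fun y => f (isirVec n x y k) * (G (isirVec n x y k) / ∑ j, G (isirVec n x y j)))
        (Measure.pi fun _ : Fin (n + 1) => M) := by
    intro x hx k
    refine Fin.cases ?_ ?_ k
    · have hb : ∀ y : Fin (n + 1) → X,
          ‖f (isirVec n x y 0) * (G (isirVec n x y 0) / ∑ j, G (isirVec n x y j))‖ ≤ |f x| := by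
        intro y
        have h0 : isirVec n x y 0 = x := rfl
        rw [h0, Real.norm_eq_abs, abs_mul]
        have hpos : (0 : ℝ) < ∑ j, G (isirVec n x y j) := lt_of_lt_of_le hx (hSx x y)
        have hw1 : G x / ∑ j, G (isirVec n x y j) ≤ 1 := (div_le_one hpos).2 (hSx x y)
        have hw0 : 0 ≤ G x / ∑ j, G (isirVec n x y j) := div_nonneg (hGnonneg x) hpos.le
        calc |f x| * |G x / ∑ j, G (isirVec n x y j)|
            = |f x| * (G x / ∑ j, G (isirVec n x y j)) := by rw [abs_of_nonneg hw0]
          _ ≤ |f x| * 1 := mul_le_mul_of_nonneg_left hw1 (abs_nonneg _)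
          _ = |f x| := mul_one _
      exact Integrable.mono' (integrable_const |f x|)
        ((hf.comp ((measurable_pi_apply 0).comp (measurable_consx n x))).mul
          (hwmeas x 0)).aestronglyMeasurable (ae_of_all _ hb)
    · intro j
      have hdom : Integrable (fun y : Fin (n + 1) → X => |f (y j)| * G (y j) * (G x)⁻¹)
          (Measure.pi fun _ : Fin (n + 1) => M) :=
        (((mp_eval M j).integrable_comp habsfG.aestronglyMeasurable).2 habsfG).mul_const _
      refine Integrable.mono' hdom
        ((hf.comp ((measurable_pi_apply j.succ).comp (measurable_consx n x))).mul
          (hwmeas x j.succ)).aestronglyMeasurable (ae_of_all _ fun y => ?_)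
      have hsucc : isirVec n x y j.succ = y j := by simp [isirVec]
      rw [Real.norm_eq_abs, hsucc, abs_mul]
      have hw0 : 0 ≤ G (y j) / ∑ jj, G (isirVec n x y jj) :=
        div_nonneg (hGnonneg _) (Finset.sum_nonneg fun jj _ => hGnonneg _)
      have hwle : G (y j) / ∑ jj, G (isirVec n x y jj) ≤ G (y j) / G x :=
        div_le_div_of_nonneg_left (hGnonneg _) hx (hSx x y)
      calc |f (y j)| * |G (y j) / ∑ jj, G (isirVec n x y jj)|
          = |f (y j)| * (G (y j) / ∑ jj, G (isirVec n x y jj)) := by rw [abs_of_nonneg hw0]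
        _ ≤ |f (y j)| * (G (y j) / G x) := mul_le_mul_of_nonneg_left hwle (abs_nonneg _)
        _ = |f (y j)| * G (y j) * (G x)⁻¹ := by ring
  -- inner integral formula, for `G x > 0`
  have hInner : ∀ x : X, 0 < G x → ∫ y, f y ∂(isirKernel M G n x)
      = ∑ k : Fin (n + 2), ∫ y, (G (isirVec n x y k) / ∑ j, G (isirVec n x y j))
          * f (isirVec n x y k) ∂(Measure.pi fun _ : Fin (n + 1) => M) := by
    intro x hx
    have hmapmeas : ∀ k : Fin (n + 2), Measurable fun y : Fin (n + 1) → X => isirVec n x y k :=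
      fun k => (measurable_pi_apply k).comp (measurable_consx n x)
    have hint : ∀ k : Fin (n + 2), Integrable f
        (Measure.map (fun y : Fin (n + 1) → X => isirVec n x y k)
          ((Measure.pi fun _ : Fin (n + 1) => M).withDensity
            (fun y => ENNReal.ofReal
              (G (isirVec n x y k) / ∑ j, G (isirVec n x y j))))) := by
      intro k
      rw [integrable_map_measure hf.stronglyMeasurable.aestronglyMeasurable
        (hmapmeas k).aemeasurable]
      have : (f ∘ fun y : Fin (n + 1) → X => isirVec n x y k)
          = fun y => f (isirVec n x y k) := rfl
      rw [this, integrable_withDensity_ofReal_iff (hwmeas x k) (fun y => hwnonneg x y k)]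
      exact hcompInt x hx k
    rw [isirKernel, integral_finset_sum_measure (fun k _ => hint k)]
    refine Finset.sum_congr rfl fun k _ => ?_
    rw [integral_map (hmapmeas k).aemeasurable hf.stronglyMeasurable.aestronglyMeasurable]
    exact integral_withDensity_ofReal _ (hwmeas x k) (fun y => hwnonneg x y k) _
  -- the product-space integrands
  have hΘint : ∀ k : Fin (n + 2), Integrable (fun p : X × (Fin (n + 1) → X) =>
      (G p.1 * f p.1) * ((G (isirVec n p.1 p.2 k) / ∑ j, G (isirVec n p.1 p.2 j))
        * f (isirVec n p.1 p.2 k)))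
      (M.prod (Measure.pi fun _ : Fin (n + 1) => M)) := by
    intro k
    have hψint : Integrable (fun z : Fin (n + 2) → X =>
        (G (z 0) * f (z 0)) * ((G (z k) / ∑ j, G (z j)) * f (z k)))
        (Measure.pi fun _ : Fin (n + 2) => M) := by
      refine (integrable_tInt hf hG hGnonneg hf2G 0 k).congr
        (Filter.Eventually.of_forall fun z => ?_)
      simp only [tInt]; ring
    exact ((mp_cons M n).integrable_comp hψint.aestronglyMeasurable).2 hψint
  -- the main computation
  have hsum : ∀ x : X, G x * (f x * ∫ y, f y ∂(isirKernel M G n x))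
      = ∑ k : Fin (n + 2), ∫ y, (G x * f x) * ((G (isirVec n x y k)
          / ∑ j, G (isirVec n x y j)) * f (isirVec n x y k))
          ∂(Measure.pi fun _ : Fin (n + 1) => M) := by
    intro x
    rcases le_or_gt (G x) 0 with hx | hx
    · have hx0 : G x = 0 := le_antisymm hx (hGnonneg x)
      simp [hx0]
    · rw [hInner x hx, ← mul_assoc, Finset.mul_sum]
      exact Finset.sum_congr rfl fun k _ => (integral_const_mul (G x * f x) _).symm
  have hQ : ∫ x, f x * ∫ y, f y ∂(isirKernel M G n x) ∂π
      = ∑ k : Fin (n + 2), ∫ z, tInt f G n 0 k z ∂(Measure.pi fun _ : Fin (n + 2) => M) := by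
    calc ∫ x, f x * ∫ y, f y ∂(isirKernel M G n x) ∂π
        = ∫ x, G x * (f x * ∫ y, f y ∂(isirKernel M G n x)) ∂M := by
          rw [hπ]; exact integral_withDensity_ofReal M hG hGnonneg _
      _ = ∫ x, ∑ k : Fin (n + 2), ∫ y, (G x * f x) * ((G (isirVec n x y k)
            / ∑ j, G (isirVec n x y j)) * f (isirVec n x y k))
            ∂(Measure.pi fun _ : Fin (n + 1) => M) ∂M :=
          integral_congr_ae (Filter.Eventually.of_forall hsum)
      _ = ∑ k : Fin (n + 2), ∫ x, ∫ y, (G x * f x) * ((G (isirVec n x y k)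
            / ∑ j, G (isirVec n x y j)) * f (isirVec n x y k))
            ∂(Measure.pi fun _ : Fin (n + 1) => M) ∂M :=
          integral_finset_sum _ fun k _ => (hΘint k).integral_prod_left
      _ = ∑ k : Fin (n + 2), ∫ p, (G p.1 * f p.1) * ((G (isirVec n p.1 p.2 k)
            / ∑ j, G (isirVec n p.1 p.2 j)) * f (isirVec n p.1 p.2 k))
            ∂(M.prod (Measure.pi fun _ : Fin (n + 1) => M)) :=
          Finset.sum_congr rfl fun k _ => integral_integral (hΘint k)
      _ = ∑ k : Fin (n + 2), ∫ z, (G (z 0) * f (z 0)) * ((G (z k) / ∑ j, G (z j)) * f (z k))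
            ∂(Measure.pi fun _ : Fin (n + 2) => M) := by
          refine Finset.sum_congr rfl fun k _ => ?_
          exact (mp_cons M n).integral_comp (me_cons n)
            (fun z => (G (z 0) * f (z 0)) * ((G (z k) / ∑ j, G (z j)) * f (z k)))
      _ = ∑ k : Fin (n + 2), ∫ z, tInt f G n 0 k z ∂(Measure.pi fun _ : Fin (n + 2) => M) := by
          refine Finset.sum_congr rfl fun k _ =>
            integral_congr_ae (Filter.Eventually.of_forall fun z => ?_)
          simp only [tInt]; ring
  -- symmetrization
  have hTperm : ∀ l : Fin (n + 2),
      (∑ k : Fin (n + 2), ∫ z, tInt f G n l k z ∂(Measure.pi fun _ : Fin (n + 2) => M))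
        = ∑ k : Fin (n + 2), ∫ z, tInt f G n 0 k z ∂(Measure.pi fun _ : Fin (n + 2) => M) := by
    intro l
    calc (∑ k : Fin (n + 2), ∫ z, tInt f G n l k z ∂(Measure.pi fun _ : Fin (n + 2) => M))
        = ∑ k : Fin (n + 2), ∫ z, tInt f G n l (Equiv.swap (0 : Fin (n + 2)) l k) z
            ∂(Measure.pi fun _ : Fin (n + 2) => M) :=
          (Equiv.sum_comp (Equiv.swap (0 : Fin (n + 2)) l)
            (fun k => ∫ z, tInt f G n l k z ∂(Measure.pi fun _ : Fin (n + 2) => M))).symm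
      _ = ∑ k : Fin (n + 2), ∫ z, tInt f G n 0 k z ∂(Measure.pi fun _ : Fin (n + 2) => M) := by
          refine Finset.sum_congr rfl fun k _ => ?_
          have := integral_tInt_perm (M := M) (f := f) (G := G)
            (Equiv.swap (0 : Fin (n + 2)) l) 0 k
          rwa [Equiv.swap_apply_left] at this
  have hsq : 0 ≤ ∑ l : Fin (n + 2), ∑ k : Fin (n + 2),
      ∫ z, tInt f G n l k z ∂(Measure.pi fun _ : Fin (n + 2) => M) := by
    have hrepr : (∑ l : Fin (n + 2), ∑ k : Fin (n + 2),
        ∫ z, tInt f G n l k z ∂(Measure.pi fun _ : Fin (n + 2) => M))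
        = ∫ z, (∑ k : Fin (n + 2), f (z k) * G (z k)) ^ 2 / (∑ j, G (z j))
            ∂(Measure.pi fun _ : Fin (n + 2) => M) := by
      have h1 : ∀ l : Fin (n + 2), (∑ k : Fin (n + 2),
          ∫ z, tInt f G n l k z ∂(Measure.pi fun _ : Fin (n + 2) => M))
          = ∫ z, ∑ k : Fin (n + 2), tInt f G n l k z ∂(Measure.pi fun _ : Fin (n + 2) => M) :=
        fun l => (integral_finset_sum _ fun k _ => integrable_tInt hf hG hGnonneg hf2G l k).symm
      calc (∑ l : Fin (n + 2), ∑ k : Fin (n + 2),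
            ∫ z, tInt f G n l k z ∂(Measure.pi fun _ : Fin (n + 2) => M))
          = ∑ l : Fin (n + 2), ∫ z, ∑ k : Fin (n + 2), tInt f G n l k z
              ∂(Measure.pi fun _ : Fin (n + 2) => M) := Finset.sum_congr rfl fun l _ => h1 l
        _ = ∫ z, ∑ l : Fin (n + 2), ∑ k : Fin (n + 2), tInt f G n l k z
              ∂(Measure.pi fun _ : Fin (n + 2) => M) :=
            (integral_finset_sum _ fun l _ => integrable_finset_sum _
              fun k _ => integrable_tInt hf hG hGnonneg hf2G l k).symm
        _ = ∫ z, (∑ k : Fin (n + 2), f (z k) * G (z k)) ^ 2 / (∑ j, G (z j))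
              ∂(Measure.pi fun _ : Fin (n + 2) => M) := by
            refine integral_congr_ae (Filter.Eventually.of_forall fun z => ?_)
            show (∑ l : Fin (n + 2), ∑ k : Fin (n + 2), tInt f G n l k z)
              = (∑ k : Fin (n + 2), f (z k) * G (z k)) ^ 2 / ∑ j, G (z j)
            rw [pow_two, Finset.sum_mul_sum, Finset.sum_div]
            refine Finset.sum_congr rfl fun l _ => ?_
            rw [Finset.sum_div]
            refine Finset.sum_congr rfl fun k _ => ?_
            simp only [tInt]; ring
    rw [hrepr]
    exact integral_nonneg fun z => div_nonneg (sq_nonneg _) (hsumnn z)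
  -- conclude
  have hfinal : 0 ≤ ((n : ℝ) + 2) * ∫ x, f x * ∫ y, f y ∂(isirKernel M G n x) ∂π := by
    have : (∑ l : Fin (n + 2), ∑ k : Fin (n + 2),
        ∫ z, tInt f G n l k z ∂(Measure.pi fun _ : Fin (n + 2) => M))
        = ((n : ℝ) + 2) * ∫ x, f x * ∫ y, f y ∂(isirKernel M G n x) ∂π := by
      rw [hQ]
      rw [Finset.sum_congr rfl fun l _ => hTperm l]
      rw [Finset.sum_const, Finset.card_univ, Fintype.card_fin, nsmul_eq_mul]
      push_cast
      ring
    linarith [this ▸ hsq]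
  nlinarith [hfinal]

lemma kernel_null (hG : Measurable G) (hGnonneg : ∀ x, 0 ≤ G x) {N : Set X}
    (hN : MeasurableSet N) (hMN : M (N ∩ {u | 0 < G u}) = 0) {x : X} (hx : x ∉ N) :
    isirKernel M G n x N = 0 := by
  rw [isirKernel_apply M n hG x hN]
  refine Finset.sum_eq_zero fun k _ => ?_
  refine Fin.cases ?_ ?_ k
  · rw [← lintegral_zero]
    refine lintegral_congr fun y => ?_
    rw [show isirVec n x y 0 = x from rfl, Set.indicator_of_notMem hx, zero_mul]
  · intro j
    have hGset : MeasurableSet {u : X | 0 < G u} := measurableSet_lt measurable_const hG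
    have hbound : ∀ y : Fin (n + 1) → X,
        N.indicator (fun _ => (1 : ℝ≥0∞)) (isirVec n x y j.succ)
          * ENNReal.ofReal (G (isirVec n x y j.succ) / ∑ jj, G (isirVec n x y jj))
          ≤ (N ∩ {u | 0 < G u}).indicator (fun _ => (1 : ℝ≥0∞)) (y j) := by
      intro y
      have hsucc : isirVec n x y j.succ = y j := by simp [isirVec]
      rw [hsucc]
      by_cases hyN : y j ∈ N
      · by_cases hyG : 0 < G (y j)
        · have hone : (N ∩ {u | 0 < G u}).indicator (fun _ => (1 : ℝ≥0∞)) (y j) = 1 :=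
            Set.indicator_of_mem (Set.mem_inter hyN hyG) _
          rw [hone, Set.indicator_of_mem hyN, one_mul]
          have hS : G (y j) ≤ ∑ jj, G (isirVec n x y jj) := by
            have := Finset.single_le_sum (f := fun jj => G (isirVec n x y jj))
              (fun _ _ => hGnonneg _) (Finset.mem_univ j.succ)
            simpa [hsucc] using this
          exact ENNReal.ofReal_le_one.2 ((div_le_one (lt_of_lt_of_le hyG hS)).2 hS)
        · have hG0 : G (y j) = 0 := le_antisymm (not_lt.1 hyG) (hGnonneg _)
          simp [hG0]
      · rw [Set.indicator_of_notMem hyN, zero_mul]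
        exact zero_le
    refine le_antisymm ?_ zero_le
    calc ∫⁻ y, N.indicator (fun _ => (1 : ℝ≥0∞)) (isirVec n x y j.succ)
          * ENNReal.ofReal (G (isirVec n x y j.succ) / ∑ jj, G (isirVec n x y jj))
          ∂(Measure.pi fun _ : Fin (n + 1) => M)
        ≤ ∫⁻ y, (N ∩ {u | 0 < G u}).indicator (fun _ => (1 : ℝ≥0∞)) (y j)
          ∂(Measure.pi fun _ : Fin (n + 1) => M) := lintegral_mono hbound
      _ = ∫⁻ u, (N ∩ {u | 0 < G u}).indicator (fun _ => (1 : ℝ≥0∞)) u ∂M :=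
          (mp_eval M j).lintegral_comp (measurable_const.indicator (hN.inter hGset))
      _ = M (N ∩ {u | 0 < G u}) := lintegral_indicator_one (hN.inter hGset)
      _ = 0 := hMN

end Pos


end IsirAux

/-- The i-SIR kernel `P_N` is reversible with respect to `π` and is a positive operator
on `L²(X, π)`. -/
theorem isir_reversible_and_positive {X : Type*} [MeasurableSpace X]
    (M π : Measure X) [IsProbabilityMeasure M] [IsProbabilityMeasure π]
    (hac : π ≪ M)
    (G : X → ℝ) (hGmeas : Measurable G) (hGnonneg : ∀ x, 0 ≤ G x)
    (hGrn : ∀ A : Set X, MeasurableSet A → π A = ∫⁻ x in A, ENNReal.ofReal (G x) ∂M)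
    (n : ℕ) :
    (∀ A B : Set X, MeasurableSet A → MeasurableSet B →
      ∫⁻ x in A, isirKernel M G n x B ∂π = ∫⁻ x in B, isirKernel M G n x A ∂π) ∧
    (∀ f : X → ℝ, MemLp f 2 π →
      0 ≤ ∫ x, f x * ∫ y, f y ∂(isirKernel M G n x) ∂π) := by
  have hπd : π = M.withDensity fun x => ENNReal.ofReal (G x) := by
    ext s hs
    rw [hGrn s hs, withDensity_apply _ hs]
  constructor
  · intro A B hA hB
    rw [IsirAux.lintegral_isir π hGmeas hπd hA hB, IsirAux.lintegral_isir π hGmeas hπd hB hA]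
    exact Finset.sum_congr rfl fun k _ => IsirAux.lintegral_revInt_symm hGmeas hGnonneg hA hB k
  · intro f hf2
    obtain ⟨g, hgsm, hfg⟩ : ∃ g, StronglyMeasurable g ∧ f =ᵐ[π] g :=
      ⟨hf2.aestronglyMeasurable.mk f, hf2.aestronglyMeasurable.stronglyMeasurable_mk,
        hf2.aestronglyMeasurable.ae_eq_mk⟩
    have hgmeas : Measurable g := hgsm.measurable
    have hg2 : MemLp g 2 π := hf2.ae_eq hfg
    have hNbnull : π {x | f x ≠ g x} = 0 := by simpa [Filter.EventuallyEq, ae_iff] using hfg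
    set N := toMeasurable π {x | f x ≠ g x} with hNdef
    have hNmeas : MeasurableSet N := measurableSet_toMeasurable π _
    have hNnull : π N = 0 := by rw [hNdef, measure_toMeasurable]; exact hNbnull
    have hsub : {x | f x ≠ g x} ⊆ N := subset_toMeasurable π _
    have hMN : M (N ∩ {u | 0 < G u}) = 0 := by
      have h0 : ∫⁻ u in N, ENNReal.ofReal (G u) ∂M = 0 := by
        rw [← hGrn N hNmeas]; exact hNnull
      have hae : (fun u => ENNReal.ofReal (G u)) =ᵐ[M.restrict N] 0 :=
        (lintegral_eq_zero_iff (ENNReal.measurable_ofReal.comp hGmeas)).1 h0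
      have hres0 : (M.restrict N) {u | ENNReal.ofReal (G u) ≠ 0} = 0 := by
        simpa [Filter.EventuallyEq, ae_iff] using hae
      have hset : {u : X | 0 < G u} ⊆ {u | ENNReal.ofReal (G u) ≠ 0} := fun u hu => by
        simp only [Set.mem_setOf_eq, ne_eq, ENNReal.ofReal_eq_zero, not_le]
        exact hu
      have hres : (M.restrict N) {u | 0 < G u} = 0 := measure_mono_null hset hres0
      rw [Measure.restrict_apply (measurableSet_lt measurable_const hGmeas)] at hres
      rwa [Set.inter_comm] at hres
    have key : (fun x => f x * ∫ y, f y ∂(isirKernel M G n x))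
        =ᵐ[π] fun x => g x * ∫ y, g y ∂(isirKernel M G n x) := by
      have hxni : ∀ᵐ x ∂π, x ∉ N := by
        rw [ae_iff]
        simpa using hNnull
      filter_upwards [hxni] with x hx
      have hfgx : f x = g x := by
        by_contra h
        exact hx (hsub h)
      have hkx : isirKernel M G n x N = 0 :=
        IsirAux.kernel_null hGmeas hGnonneg hNmeas hMN hx
      have hker : ∫ y, f y ∂(isirKernel M G n x) = ∫ y, g y ∂(isirKernel M G n x) := by
        refine integral_congr_ae ?_
        rw [Filter.EventuallyEq, ae_iff]
        exact measure_mono_null (fun u hu => hsub hu) hkx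
      rw [hfgx, hker]
    rw [integral_congr_ae key]
    exact IsirAux.isir_positive π hGmeas hGnonneg hπd hgmeas hg2
end

section
/- If Ḡ := sup_{x∈X} G(x) < ∞, then for every N ≥ 2, every x ∈ X and every S ∈ B(X), the i-SIR kernel satisfies the uniform minorization P_N(x,S) ≥ ((N−1)/(2Ḡ + N − 2)) · π(S). -/
open MeasureTheory
open scoped ENNReal

lemma measurePreserving_eval_pi {X : Type*} [MeasurableSpace X] (M : Measure X)
    [IsProbabilityMeasure M] {m : ℕ} (i : Fin m) :
    MeasurePreserving (fun r : Fin m → X => r i) (Measure.pi fun _ => M) M := by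
  match m, i with
  | m + 1, i =>
    have h1 := measurePreserving_piFinSuccAbove (fun _ : Fin (m + 1) => M) i
    have h2 : MeasurePreserving (Prod.fst : X × (Fin m → X) → X)
        (M.prod (Measure.pi fun _ : Fin m => M)) M := by
      refine ⟨measurable_fst, ?_⟩
      rw [Measure.map_fst_prod]; simp
    have h3 := h2.comp h1
    have heq : (Prod.fst ∘ (MeasurableEquiv.piFinSuccAbove (fun _ : Fin (m + 1) => X) i))
        = fun r : Fin (m + 1) → X => r i := by funext r; rfl
    rwa [heq] at h3

lemma isir_sum_facts {X : Type*} [MeasurableSpace X] (M : Measure X)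
    [IsProbabilityMeasure M] (G : X → ℝ) (hGmeas : Measurable G)
    (hGint : Integrable G M) (hGone : ∫ z, G z ∂M = 1) (m : ℕ) :
    Integrable (fun r : Fin m → X => ∑ i, G (r i)) (Measure.pi fun _ => M) ∧
      ∫ r : Fin m → X, (∑ i, G (r i)) ∂(Measure.pi fun _ => M) = m := by
  have key : ∀ i : Fin m, Integrable (fun r : Fin m → X => G (r i)) (Measure.pi fun _ => M) ∧
      ∫ r : Fin m → X, G (r i) ∂(Measure.pi fun _ => M) = 1 := by
    intro i
    have hp := measurePreserving_eval_pi M i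
    constructor
    · have := (hp.integrable_comp hGmeas.aestronglyMeasurable).2 hGint
      exact this
    · rw [← hp.map_eq, integral_map (measurable_pi_apply i).aemeasurable
        hGmeas.aestronglyMeasurable] at hGone
      exact hGone
  constructor
  · exact integrable_finset_sum _ fun i _ => (key i).1
  · rw [integral_finset_sum _ fun i _ => (key i).1]
    simp [fun i : Fin m => (key i).2]

lemma isir_inner {X : Type*} [MeasurableSpace X] (M : Measure X) [IsProbabilityMeasure M]
    (G : X → ℝ) (hGmeas : Measurable G) (hGnonneg : ∀ z, 0 ≤ G z)
    (hGint : Integrable G M) (hGone : ∫ z, G z ∂M = 1)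
    (B : ℝ) (hB : ∀ z, G z ≤ B)
    (m : ℕ) (a : ℝ) (ha0 : 0 ≤ a) (haB : a ≤ B) (t : X) :
    ENNReal.ofReal (G t / (2 * B + m)) ≤
      ∫⁻ r : Fin m → X, ENNReal.ofReal (G t / (a + (G t + ∑ i, G (r i))))
        ∂(Measure.pi fun _ => M) := by
  by_cases hGt : G t = 0
  · simp [hGt]
  have hGtpos : 0 < G t := lt_of_le_of_ne (hGnonneg t) (Ne.symm hGt)
  obtain ⟨hs_int, hs_val⟩ := isir_sum_facts M G hGmeas hGint hGone m
  have hs_meas : Measurable (fun r : Fin m → X => ∑ i, G (r i)) :=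
    Finset.measurable_sum _ fun i _ => hGmeas.comp (measurable_pi_apply i)
  have hs_nonneg : ∀ r : Fin m → X, 0 ≤ ∑ i, G (r i) :=
    fun r => Finset.sum_nonneg fun i _ => hGnonneg _
  set c0 : ℝ := a + G t + m with hc0
  have hc0pos : 0 < c0 := by positivity
  have hW_meas : Measurable (fun r : Fin m → X => G t / (a + (G t + ∑ i, G (r i)))) :=
    measurable_const.div ((measurable_const.add hs_meas).const_add a)
  have hW_int : Integrable (fun r : Fin m → X => G t / (a + (G t + ∑ i, G (r i))))
      (Measure.pi fun _ => M) := by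
    refine ⟨hW_meas.aestronglyMeasurable, ?_⟩
    refine HasFiniteIntegral.of_bounded (C := 1) ?_
    filter_upwards with r
    have hsr := hs_nonneg r
    rw [Real.norm_eq_abs, abs_of_nonneg (div_nonneg hGtpos.le (by linarith))]
    exact div_le_one_of_le₀ (by linarith) (by linarith)
  have hadd1 : Integrable (fun r : Fin m → X => G t + ∑ i, G (r i)) (Measure.pi fun _ => M) := by
    exact (integrable_const (G t)).add hs_int
  have hadd2 : Integrable (fun r : Fin m → X => a + (G t + ∑ i, G (r i)))
      (Measure.pi fun _ => M) := by
    exact (integrable_const a).add hadd1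
  have h2 : Integrable (fun r : Fin m → X => G t * ((a + (G t + ∑ i, G (r i))) / c0 ^ 2))
      (Measure.pi fun _ => M) := by
    exact (hadd2.div_const _).const_mul _
  have hphi_int : Integrable
      (fun r : Fin m → X => G t * (2 / c0) - G t * ((a + (G t + ∑ i, G (r i))) / c0 ^ 2))
      (Measure.pi fun _ => M) := by
    exact (integrable_const _).sub h2
  have hpoint : ∀ r : Fin m → X,
      G t * (2 / c0) - G t * ((a + (G t + ∑ i, G (r i))) / c0 ^ 2)
        ≤ G t / (a + (G t + ∑ i, G (r i))) := by
    intro r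
    have hsr := hs_nonneg r
    set s := ∑ i, G (r i) with hsdef
    have hupos : (0:ℝ) < a + (G t + s) := by linarith
    have h : 2 / c0 - (a + (G t + s)) / c0 ^ 2 ≤ 1 / (a + (G t + s)) := by
      rw [div_sub_div _ _ hc0pos.ne' (by positivity), div_le_div_iff₀ (by positivity) hupos]
      nlinarith [sq_nonneg ((a + (G t + s)) - c0)]
    calc G t * (2 / c0) - G t * ((a + (G t + s)) / c0 ^ 2)
        = G t * (2 / c0 - (a + (G t + s)) / c0 ^ 2) := by ring
      _ ≤ G t * (1 / (a + (G t + s))) := mul_le_mul_of_nonneg_left h hGtpos.le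
      _ = G t / (a + (G t + s)) := by rw [mul_one_div]
  have hJ : ∫ r : Fin m → X,
      (G t * (2 / c0) - G t * ((a + (G t + ∑ i, G (r i))) / c0 ^ 2))
        ∂(Measure.pi fun _ => M) = G t / c0 := by
    rw [integral_sub (integrable_const _) h2]
    rw [integral_const, integral_const_mul, integral_div,
      integral_add (integrable_const _) hadd1]
    rw [integral_add (integrable_const _) hs_int, hs_val, integral_const, integral_const]
    simp only [measure_univ, ENNReal.toReal_one, smul_eq_mul, one_mul, probReal_univ]
    field_simp
    ring
  rw [← ofReal_integral_eq_lintegral_ofReal hW_int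
    (Filter.Eventually.of_forall fun r => div_nonneg hGtpos.le
      (by have := hs_nonneg r; linarith))]
  apply ENNReal.ofReal_le_ofReal
  calc G t / (2 * B + m) ≤ G t / c0 := by
        apply div_le_div_of_nonneg_left hGtpos.le hc0pos
        have := hB t
        simp only [hc0]
        linarith
    _ = ∫ r : Fin m → X, (G t * (2 / c0) - G t * ((a + (G t + ∑ i, G (r i))) / c0 ^ 2))
          ∂(Measure.pi fun _ => M) := hJ.symm
    _ ≤ _ := integral_mono hphi_int hW_int hpoint

/-- If `Ḡ = sup_x G(x) < ∞` then the i-SIR kernel with `N = n + 2 ≥ 2` particles satisfies the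
uniform minorization `P_N(x, S) ≥ ((N - 1)/(2Ḡ + N - 2)) ⬝ π(S)`. -/
theorem isir_uniform_minorization {X : Type*} [MeasurableSpace X]
    (M π : Measure X) [IsProbabilityMeasure M] [IsProbabilityMeasure π]
    (hac : π ≪ M)
    (G : X → ℝ) (hGmeas : Measurable G) (hGnonneg : ∀ x, 0 ≤ G x)
    (hGrn : ∀ A : Set X, MeasurableSet A → π A = ∫⁻ x in A, ENNReal.ofReal (G x) ∂M)
    (hGbdd : BddAbove (Set.range G))
    (n : ℕ) (x : X) (S : Set X) (hS : MeasurableSet S) :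
    ENNReal.ofReal (((n : ℝ) + 1) / (2 * (⨆ z, G z) + n)) * π S ≤ isirKernel M G n x S := by
  classical
  set B := ⨆ z, G z with hBdef
  have hB : ∀ z, G z ≤ B := fun z => le_ciSup hGbdd z
  have hGintM : Integrable G M :=
    ⟨hGmeas.aestronglyMeasurable, HasFiniteIntegral.of_bounded (C := B)
      (Filter.Eventually.of_forall fun z => by
        rw [Real.norm_eq_abs, abs_of_nonneg (hGnonneg z)]; exact hB z)⟩
  have hlint : ∫⁻ z, ENNReal.ofReal (G z) ∂M = 1 := by
    have h := hGrn Set.univ MeasurableSet.univ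
    rw [Measure.restrict_univ] at h
    simpa [measure_univ] using h.symm
  have hGone : ∫ z, G z ∂M = 1 := by
    rw [integral_eq_lintegral_of_nonneg_ae (Filter.Eventually.of_forall hGnonneg)
      hGmeas.aestronglyMeasurable, hlint]
    simp
  have hB1 : (1 : ℝ) ≤ B := by
    have h := integral_mono hGintM (integrable_const B) hB
    rw [hGone, integral_const] at h
    simpa [measure_univ] using h
  have hn0 : (0 : ℝ) ≤ n := Nat.cast_nonneg n
  have hBpos : (0 : ℝ) < 2 * B + n := by linarith
  -- the bound for each nonzero particle index
  have hterm : ∀ k' : Fin (n + 1),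
      ENNReal.ofReal (1 / (2 * B + n)) * π S ≤
      (Measure.map (fun y : Fin (n + 1) → X => isirVec n x y k'.succ)
        ((Measure.pi fun _ : Fin (n + 1) => M).withDensity
          (fun y => ENNReal.ofReal
            (G (isirVec n x y k'.succ) / ∑ j : Fin (n + 2), G (isirVec n x y j))))) S := by
    intro k'
    have hcons_meas : ∀ j : Fin (n + 2), Measurable (fun y : Fin (n + 1) → X => isirVec n x y j) := by
      intro j
      refine Fin.cases ?_ ?_ j
      · simp only [isirVec, Fin.cons_zero]; exact measurable_const
      · intro i; simp only [isirVec, Fin.cons_succ]; exact measurable_pi_apply i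
    set w : (Fin (n + 1) → X) → ℝ≥0∞ := fun y => ENNReal.ofReal
      (G (isirVec n x y k'.succ) / ∑ j : Fin (n + 2), G (isirVec n x y j)) with hw
    have hw_meas : Measurable w := by
      apply ENNReal.measurable_ofReal.comp
      exact (hGmeas.comp (hcons_meas k'.succ)).div
        (Finset.measurable_sum _ fun j _ => hGmeas.comp (hcons_meas j))
    have hf_eq : (fun y : Fin (n + 1) → X => isirVec n x y k'.succ)
        = fun y : Fin (n + 1) → X => y k' := by
      funext y; simp [isirVec]
    rw [hf_eq, Measure.map_apply (measurable_pi_apply k') hS,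
      withDensity_apply _ ((measurable_pi_apply k') hS)]
    set A : Set (Fin (n + 1) → X) := (fun y : Fin (n + 1) → X => y k') ⁻¹' S with hA
    have hAmeas : MeasurableSet A := (measurable_pi_apply k') hS
    rw [← lintegral_indicator hAmeas _]
    have hg_meas : Measurable (A.indicator w) := hw_meas.indicator hAmeas
    set e := MeasurableEquiv.piFinSuccAbove (fun _ : Fin (n + 1) => X) k' with he
    have hpres := measurePreserving_piFinSuccAbove (fun _ : Fin (n + 1) => M) k'
    have hfub := (hpres.symm e).lintegral_comp hg_meas
    rw [← hfub, lintegral_prod (fun p => A.indicator w (e.symm p)) (hg_meas.comp e.symm.measurable).aemeasurable]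
    have hinner : ∀ t : X,
        S.indicator (fun t => ENNReal.ofReal (G t / (2 * B + (n : ℝ)))) t ≤
        ∫⁻ r : Fin n → X, (A.indicator w) (e.symm (t, r)) ∂(Measure.pi fun _ : Fin n => M) := by
      intro t
      by_cases ht : t ∈ S
      · rw [Set.indicator_of_mem ht]
        have hvec : ∀ r : Fin n → X, e.symm (t, r) = Fin.insertNth k' t r := by
          intro r
          rw [he, MeasurableEquiv.piFinSuccAbove_symm_apply]
          rfl
        have hval : ∀ r : Fin n → X, (A.indicator w) (Fin.insertNth k' t r)
            = ENNReal.ofReal (G t / (G x + (G t + ∑ i, G (r i)))) := by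
          intro r
          have hk : Fin.insertNth (α := fun _ => X) k' t r k' = t := by simp
          have hmem : Fin.insertNth k' t r ∈ A := by
            simp only [hA, Set.mem_preimage, hk]; exact ht
          rw [Set.indicator_of_mem hmem]
          simp only [hw]
          have hnum : isirVec n x (Fin.insertNth k' t r) k'.succ = t := by
            simp only [isirVec, Fin.cons_succ]; exact hk
          have hden : ∑ j : Fin (n + 2), G (isirVec n x (Fin.insertNth k' t r) j)
              = G x + (G t + ∑ i, G (r i)) := by
            rw [Fin.sum_univ_succ]
            simp only [isirVec, Fin.cons_zero, Fin.cons_succ]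
            congr 1
            rw [Fin.sum_univ_succAbove (fun j => G (Fin.insertNth (α := fun _ => X) k' t r j)) k']
            simp [hk, Fin.insertNth_apply_succAbove]
          rw [hnum, hden]
        calc ENNReal.ofReal (G t / (2 * B + (n : ℝ)))
            ≤ ∫⁻ r : Fin n → X, ENNReal.ofReal (G t / (G x + (G t + ∑ i, G (r i))))
                ∂(Measure.pi fun _ : Fin n => M) :=
              isir_inner M G hGmeas hGnonneg hGintM hGone B hB n (G x) (hGnonneg x) (hB x) t
          _ = _ := lintegral_congr fun r => by rw [hvec r, hval r]
      · rw [Set.indicator_of_notMem ht]; exact zero_le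
    calc ENNReal.ofReal (1 / (2 * B + n)) * π S
        = π S * ENNReal.ofReal (1 / (2 * B + n)) := mul_comm _ _
      _ = (∫⁻ t in S, ENNReal.ofReal (G t) ∂M) * ENNReal.ofReal (1 / (2 * B + n)) := by
          rw [hGrn S hS]
      _ = ∫⁻ t in S, ENNReal.ofReal (G t) * ENNReal.ofReal (1 / (2 * B + n)) ∂M :=
          (lintegral_mul_const _ hGmeas.ennreal_ofReal).symm
      _ = ∫⁻ t in S, ENNReal.ofReal (G t / (2 * B + (n : ℝ))) ∂M := by
          refine lintegral_congr fun t => ?_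
          rw [← ENNReal.ofReal_mul (hGnonneg t), mul_one_div]
      _ = ∫⁻ t, S.indicator (fun t => ENNReal.ofReal (G t / (2 * B + (n : ℝ)))) t ∂M :=
          (lintegral_indicator hS _).symm
      _ ≤ _ := lintegral_mono hinner
  -- assemble
  have hcast : ENNReal.ofReal (((n : ℝ) + 1) / (2 * B + n))
      = (n + 1 : ℕ) * ENNReal.ofReal (1 / (2 * B + n)) := by
    rw [div_eq_mul_one_div ((n : ℝ) + 1), ENNReal.ofReal_mul (by positivity)]
    congr 1
    rw [show ((n : ℝ) + 1) = ((n + 1 : ℕ) : ℝ) by push_cast; ring, ENNReal.ofReal_natCast]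
  calc ENNReal.ofReal (((n : ℝ) + 1) / (2 * B + n)) * π S
      = ∑ _k' : Fin (n + 1), ENNReal.ofReal (1 / (2 * B + n)) * π S := by
        rw [Finset.sum_const, Finset.card_univ, Fintype.card_fin, hcast, nsmul_eq_mul, mul_assoc]
    _ ≤ ∑ k' : Fin (n + 1),
          (Measure.map (fun y : Fin (n + 1) → X => isirVec n x y k'.succ)
            ((Measure.pi fun _ : Fin (n + 1) => M).withDensity
              (fun y => ENNReal.ofReal
                (G (isirVec n x y k'.succ) / ∑ j : Fin (n + 2), G (isirVec n x y j))))) S :=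
        Finset.sum_le_sum fun k' _ => hterm k'
    _ ≤ ∑ k : Fin (n + 2),
          (Measure.map (fun y : Fin (n + 1) → X => isirVec n x y k)
            ((Measure.pi fun _ : Fin (n + 1) => M).withDensity
              (fun y => ENNReal.ofReal
                (G (isirVec n x y k) / ∑ j : Fin (n + 2), G (isirVec n x y j))))) S := by
        conv_rhs => rw [Fin.sum_univ_succ]
        exact le_add_self
    _ = isirKernel M G n x S := by
        rw [isirKernel, Measure.finset_sum_apply]
end

section
/- Let μ be a probability measure on (E, B(E)) and Π a Markov kernel on E reversible with respect to μ. Assume there exists ε > 0 such that Π(x,A) ≥ ε μ(A) for all x ∈ E and A ∈ B(E). Then for every f ∈ L²(E,μ) the Dirichlet form satisfies ε · var_μ(f) ≤ E_Π(f) ≤ (2−ε) · var_μ(f); consequently the right and left spectral gaps satisfy min{Gap(Π), Gap_L(Π)} ≥ ε. -/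
open MeasureTheory ProbabilityTheory
open scoped ENNReal

/-- The Dirichlet form `E_K(f) = ∫ f (f - Kf) dμ` of a Markov transition `K`. -/
noncomputable def dform {α : Type*} [MeasurableSpace α]
    (μ : Measure α) (K : α → Measure α) (f : α → ℝ) : ℝ :=
  ∫ x, f x * (f x - ∫ y, f y ∂(K x)) ∂μ

/-- The variance of `f` under `μ`: `var_μ(f) = μ(f²) - μ(f)²`. -/
noncomputable def varF {α : Type*} [MeasurableSpace α] (μ : Measure α) (f : α → ℝ) : ℝ :=
  (∫ x, f x ^ 2 ∂μ) - (∫ x, f x ∂μ) ^ 2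

/-- The right spectral gap `Gap(K) = inf {E_K(f)/var_μ(f) : f ∈ L²(μ), var_μ(f) > 0}`
(valued in `[0, ∞]`, with the convention `inf ∅ = ∞`). -/
noncomputable def gapE {α : Type*} [MeasurableSpace α]
    (μ : Measure α) (K : α → Measure α) : ℝ≥0∞ :=
  sInf {r : ℝ≥0∞ | ∃ f : α → ℝ, MemLp f 2 μ ∧ 0 < varF μ f ∧
    r = ENNReal.ofReal (dform μ K f / varF μ f)}

/-- The left spectral gap `Gap_L(K) = 2 - sup {E_K(f)/var_μ(f) : f ∈ L²(μ), var_μ(f) > 0}`. -/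
noncomputable def gapLE {α : Type*} [MeasurableSpace α]
    (μ : Measure α) (K : α → Measure α) : ℝ≥0∞ :=
  2 - sSup {r : ℝ≥0∞ | ∃ f : α → ℝ, MemLp f 2 μ ∧ 0 < varF μ f ∧
    r = ENNReal.ofReal (dform μ K f / varF μ f)}

section Helpers
variable {α : Type*} [MeasurableSpace α] {ν : Measure α}

private lemma integrable_mul_of_memL2 {f g : α → ℝ} (hf : MemLp f 2 ν) (hg : MemLp g 2 ν) :
    Integrable (fun x => f x * g x) ν := by
  have h := L2.integrable_inner (𝕜 := ℝ) (hf.toLp f) (hg.toLp g)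
  refine h.congr ?_
  filter_upwards [hf.coeFn_toLp, hg.coeFn_toLp] with x hx hy
  simp [RCLike.inner_apply, hx, hy, mul_comm]

private lemma inner_int {f g : α → ℝ} (hf : MemLp f 2 ν) (hg : MemLp g 2 ν) :
    (inner ℝ (hf.toLp f) (hg.toLp g) : ℝ) = ∫ x, f x * g x ∂ν := by
  rw [L2.inner_def]
  refine integral_congr_ae ?_
  filter_upwards [hf.coeFn_toLp, hg.coeFn_toLp] with x hx hy
  simp [RCLike.inner_apply, hx, hy, mul_comm]

private lemma cs_sq {f g : α → ℝ} (hf : MemLp f 2 ν) (hg : MemLp g 2 ν) :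
    (∫ x, f x * g x ∂ν) ^ 2 ≤ (∫ x, f x ^ 2 ∂ν) * (∫ x, g x ^ 2 ∂ν) := by
  have h := real_inner_mul_inner_self_le (hf.toLp f) (hg.toLp g)
  rw [inner_int hf hg, inner_int hf hf, inner_int hg hg] at h
  simp_rw [← sq] at h
  simpa [sq] using h

end Helpers

section Core
variable {E : Type*} [MeasurableSpace E] (μ : Measure E) [IsProbabilityMeasure μ]
  (P : Kernel E E) [IsMarkovKernel P]

private lemma snd_eq
    (hrev : ∀ A B : Set E, MeasurableSet A → MeasurableSet B →
      ∫⁻ x in A, P x B ∂μ = ∫⁻ x in B, P x A ∂μ) :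
    (μ ⊗ₘ P).snd = μ := by
  ext s hs
  rw [Measure.snd_apply hs, Measure.compProd_apply (measurable_snd hs)]
  have hpre : ∀ a : E, (Prod.mk a ⁻¹' (Prod.snd ⁻¹' s)) = s := fun a => rfl
  simp_rw [hpre]
  have h := hrev Set.univ s MeasurableSet.univ hs
  rw [Measure.restrict_univ] at h
  rw [h]
  simp [measure_univ]

private lemma memF {h : E → ℝ} (hh : MemLp h 2 μ) :
    MemLp (fun p : E × E => h p.1) 2 (μ ⊗ₘ P) := by
  have h1 : Measure.map Prod.fst (μ ⊗ₘ P) = μ := Measure.fst_compProd μ P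
  exact (memLp_map_measure_iff (by rw [h1]; exact hh.1)
    measurable_fst.aemeasurable).mp (by rw [h1]; exact hh)

private lemma memG (hsnd : (μ ⊗ₘ P).snd = μ) {h : E → ℝ} (hh : MemLp h 2 μ) :
    MemLp (fun p : E × E => h p.2) 2 (μ ⊗ₘ P) := by
  have h1 : Measure.map Prod.snd (μ ⊗ₘ P) = μ := hsnd
  exact (memLp_map_measure_iff (by rw [h1]; exact hh.1)
    measurable_snd.aemeasurable).mp (by rw [h1]; exact hh)

private lemma core (hsnd : (μ ⊗ₘ P).snd = μ) {h : E → ℝ}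
    (hsm : StronglyMeasurable h) (hh : MemLp h 2 μ) :
    Integrable (fun x => ∫ y, h y ∂P x) μ ∧
    (∫ x, (∫ y, h y ∂P x) ∂μ) = ∫ x, h x ∂μ ∧
    Integrable (fun x => h x * ∫ y, h y ∂P x) μ ∧
    (∫ x, h x * ∫ y, h y ∂P x ∂μ) = ∫ p : E × E, h p.1 * h p.2 ∂(μ ⊗ₘ P) ∧
    (∀ᵐ x ∂μ, Integrable h (P x)) := by
  have hF := memF μ P hh
  have hG := memG μ P hsnd hh
  have intFG : Integrable (fun p : E × E => h p.1 * h p.2) (μ ⊗ₘ P) :=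
    integrable_mul_of_memL2 hF hG
  have intG1 : Integrable (fun p : E × E => h p.2) (μ ⊗ₘ P) := hG.integrable one_le_two
  have hsmP : StronglyMeasurable fun x => ∫ y, h y ∂P x := by
    exact StronglyMeasurable.integral_kernel_prod_right (κ := P) (f := fun _ y => h y)
      (hsm.comp_measurable measurable_snd)
  obtain ⟨aeG, nrmG⟩ := (Measure.integrable_compProd_iff intG1.aestronglyMeasurable).mp intG1
  obtain ⟨aeFG, nrmFG⟩ := (Measure.integrable_compProd_iff intFG.aestronglyMeasurable).mp intFG
  refine ⟨?_, ?_, ?_, ?_, aeG⟩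
  · refine nrmG.mono hsmP.aestronglyMeasurable (Filter.Eventually.of_forall fun x => ?_)
    calc ‖∫ y, h y ∂P x‖ ≤ ∫ y, ‖h y‖ ∂P x := norm_integral_le_integral_norm _
    _ ≤ ‖∫ y, ‖h y‖ ∂P x‖ := le_abs_self _
  · have h1 : ∫ p : E × E, h p.2 ∂(μ ⊗ₘ P) = ∫ x, (∫ y, h y ∂P x) ∂μ := by
      rw [Measure.integral_compProd intG1]
    have h2 : ∫ p : E × E, h p.2 ∂(μ ⊗ₘ P) = ∫ x, h x ∂μ := by
      have hs : AEStronglyMeasurable h ((μ ⊗ₘ P).snd) := by rw [hsnd]; exact hh.1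
      conv_rhs => rw [← hsnd]
      exact (integral_map measurable_snd.aemeasurable hs).symm
    rw [← h1, h2]
  · refine nrmFG.mono (hsm.aestronglyMeasurable.mul hsmP.aestronglyMeasurable)
      (Filter.Eventually.of_forall fun x => ?_)
    calc ‖h x * ∫ y, h y ∂P x‖ = ‖h x‖ * ‖∫ y, h y ∂P x‖ := norm_mul _ _
    _ ≤ ‖h x‖ * ∫ y, ‖h y‖ ∂P x :=
        mul_le_mul_of_nonneg_left (norm_integral_le_integral_norm _) (norm_nonneg _)
    _ = ∫ y, ‖h x‖ * ‖h y‖ ∂P x := (integral_const_mul _ _).symm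
    _ = ∫ y, ‖h x * h y‖ ∂P x := by simp_rw [norm_mul]
    _ ≤ ‖∫ y, ‖h x * h y‖ ∂P x‖ := le_abs_self _
  · rw [Measure.integral_compProd intFG]
    congr 1 with x
    exact (integral_const_mul _ _).symm

end Core

section Bound
variable {E : Type*} [MeasurableSpace E] (μ : Measure E) [IsProbabilityMeasure μ]
  (P : Kernel E E) [IsMarkovKernel P]

private lemma lemA (hsnd : (μ ⊗ₘ P).snd = μ) {ε : ℝ} (hε0 : 0 ≤ ε) (hε1 : ε ≤ 1)
    (hmin : ∀ x : E, ∀ A : Set E, MeasurableSet A → ENNReal.ofReal ε * μ A ≤ P x A)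
    {h : E → ℝ} (hsm : StronglyMeasurable h) (hh : MemLp h 2 μ)
    (h0 : ∫ x, h x ∂μ = 0) :
    |∫ x, h x * ∫ y, h y ∂P x ∂μ| ≤ (1 - ε) * ∫ x, h x ^ 2 ∂μ := by
  classical
  set c : ℝ≥0∞ := ENNReal.ofReal ε with hc
  set Λ' : Measure (E × E) := μ ⊗ₘ P with hΛ'
  set Λ'' : Measure (E × E) := c • (μ.prod μ) with hΛ''
  have hle : Λ'' ≤ Λ' := by
    refine Measure.le_iff.mpr fun s hs => ?_
    rw [hΛ'', Measure.smul_apply, smul_eq_mul, Measure.prod_apply hs,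
      hΛ', Measure.compProd_apply hs,
      ← lintegral_const_mul c (measurable_measure_prodMk_left hs)]
    exact lintegral_mono fun a => hmin a _ (measurable_prodMk_left hs)
  haveI : IsFiniteMeasure Λ'' := by
    constructor
    rw [hΛ'', Measure.smul_apply, smul_eq_mul]
    calc c * (μ.prod μ) Set.univ ≤ c * 1 := by
          gcongr; exact prob_le_one
    _ < ⊤ := by rw [mul_one]; exact ENNReal.ofReal_lt_top
  set Λ : Measure (E × E) := Λ' - Λ'' with hΛ
  have hadd : Λ + Λ'' = Λ' := Measure.sub_add_cancel_of_le hle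
  have hΛle : Λ ≤ Λ' := Measure.sub_le
  have hF := memF μ P hh
  have hG := memG μ P hsnd hh
  have split : ∀ φ : E × E → ℝ, Integrable φ Λ' →
      ∫ p, φ p ∂Λ = (∫ p, φ p ∂Λ') - ∫ p, φ p ∂Λ'' := by
    intro φ hφ
    have h1 : ∫ p, φ p ∂Λ' = (∫ p, φ p ∂Λ) + ∫ p, φ p ∂Λ'' := by
      conv_lhs => rw [← hadd]
      exact integral_add_measure (hφ.mono_measure hΛle) (hφ.mono_measure hle)
    linarith
  have smul_int : ∀ φ : E × E → ℝ, ∫ p, φ p ∂Λ'' = ε * ∫ p, φ p ∂(μ.prod μ) := by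
    intro φ
    rw [hΛ'', integral_smul_measure, ENNReal.toReal_ofReal hε0, smul_eq_mul]
  -- values over μ.prod μ
  have hfstp : Measure.map Prod.fst (μ.prod μ) = μ := Measure.fst_prod
  have hsndp : Measure.map Prod.snd (μ.prod μ) = μ := Measure.snd_prod
  have prodF2 : ∫ p : E × E, h p.1 ^ 2 ∂(μ.prod μ) = ∫ x, h x ^ 2 ∂μ := by
    conv_rhs => rw [← hfstp]
    exact (integral_map measurable_fst.aemeasurable
      (by rw [hfstp]; exact (hsm.measurable.pow_const 2).aestronglyMeasurable)).symm
  have prodG2 : ∫ p : E × E, h p.2 ^ 2 ∂(μ.prod μ) = ∫ x, h x ^ 2 ∂μ := by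
    conv_rhs => rw [← hsndp]
    exact (integral_map measurable_snd.aemeasurable
      (by rw [hsndp]; exact (hsm.measurable.pow_const 2).aestronglyMeasurable)).symm
  have prodFG : ∫ p : E × E, h p.1 * h p.2 ∂(μ.prod μ) = 0 := by
    rw [integral_prod_mul h h, h0, mul_zero]
  -- values over Λ'
  have intF2' : Integrable (fun p : E × E => h p.1 ^ 2) Λ' := by
    simpa [sq] using integrable_mul_of_memL2 hF hF
  have intG2' : Integrable (fun p : E × E => h p.2 ^ 2) Λ' := by
    simpa [sq] using integrable_mul_of_memL2 hG hG
  have intFG' : Integrable (fun p : E × E => h p.1 * h p.2) Λ' :=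
    integrable_mul_of_memL2 hF hG
  have A1 : ∫ p : E × E, h p.1 ^ 2 ∂Λ' = ∫ x, h x ^ 2 ∂μ := by
    rw [hΛ', Measure.integral_compProd intF2']
    simp [measure_univ]
  have A2 : ∫ p : E × E, h p.2 ^ 2 ∂Λ' = ∫ x, h x ^ 2 ∂μ := by
    have hs : AEStronglyMeasurable (fun x => h x ^ 2) ((μ ⊗ₘ P).snd) := by
      rw [hsnd]; exact (hsm.measurable.pow_const 2).aestronglyMeasurable
    conv_rhs => rw [← hsnd]
    exact (integral_map measurable_snd.aemeasurable hs).symm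
  -- values over Λ
  set S : ℝ := ∫ x, h x ^ 2 ∂μ with hS
  have hS0 : 0 ≤ S := integral_nonneg fun x => sq_nonneg _
  have BF2 : ∫ p : E × E, h p.1 ^ 2 ∂Λ = (1 - ε) * S := by
    rw [split _ intF2', A1, smul_int, prodF2]; ring
  have BG2 : ∫ p : E × E, h p.2 ^ 2 ∂Λ = (1 - ε) * S := by
    rw [split _ intG2', A2, smul_int, prodG2]; ring
  have BFG : ∫ p : E × E, h p.1 * h p.2 ∂Λ =
      ∫ p : E × E, h p.1 * h p.2 ∂Λ' := by
    rw [split _ intFG', smul_int, prodFG, mul_zero, sub_zero]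
  -- Cauchy-Schwarz over Λ
  have hcs := cs_sq (hF.mono_measure hΛle) (hG.mono_measure hΛle)
  rw [BF2, BG2, BFG] at hcs
  -- identify the integral
  have hI : ∫ x, h x * ∫ y, h y ∂P x ∂μ = ∫ p : E × E, h p.1 * h p.2 ∂Λ' :=
    (core μ P hsnd hsm hh).2.2.2.1
  rw [hI]
  have h1e : 0 ≤ (1 - ε) * S := mul_nonneg (by linarith) hS0
  nlinarith [abs_nonneg (∫ p : E × E, h p.1 * h p.2 ∂Λ'),
    sq_abs (∫ p : E × E, h p.1 * h p.2 ∂Λ')]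

end Bound

section Reduction
open MeasureTheory ProbabilityTheory Set
open scoped ENNReal

variable {E : Type*} [MeasurableSpace E] (μ : Measure E) [IsProbabilityMeasure μ]
  (P : Kernel E E) [IsMarkovKernel P]

private lemma dform_split (hsnd : (μ ⊗ₘ P).snd = μ) {h : E → ℝ}
    (hsm : StronglyMeasurable h) (hh : MemLp h 2 μ) :
    dform μ (fun x => P x) h
      = (∫ x, h x ^ 2 ∂μ) - ∫ x, h x * ∫ y, h y ∂P x ∂μ := by
  have int1 : Integrable (fun x => h x * h x) μ := integrable_mul_of_memL2 hh hh
  have int2 := (core μ P hsnd hsm hh).2.2.1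
  unfold dform
  have heq : (fun x => h x * (h x - ∫ y, h y ∂P x))
      = fun x => h x * h x - h x * ∫ y, h y ∂P x := by funext x; ring
  rw [heq, integral_sub int1 int2]
  congr 1
  simp_rw [sq]

private lemma dform_congr_ae
    (hrev : ∀ A B : Set E, MeasurableSet A → MeasurableSet B →
      ∫⁻ x in A, P x B ∂μ = ∫⁻ x in B, P x A ∂μ)
    {f g : E → ℝ} (hfg : f =ᵐ[μ] g) :
    dform μ (fun x => P x) f = dform μ (fun x => P x) g := by
  have hinv : ∀ A : Set E, MeasurableSet A → ∫⁻ x, P x A ∂μ = μ A := by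
    intro A hA
    have hh := hrev Set.univ A MeasurableSet.univ hA
    rw [Measure.restrict_univ] at hh
    rw [hh]
    simp [measure_univ]
  set N := toMeasurable μ {x | f x ≠ g x} with hN
  have hNm : MeasurableSet N := measurableSet_toMeasurable μ _
  have hNz : μ N = 0 := by
    rw [hN, measure_toMeasurable]
    exact ae_iff.mp hfg
  have hPN : ∀ᵐ x ∂μ, P x N = 0 := by
    have hz : ∫⁻ x, P x N ∂μ = 0 := by rw [hinv N hNm, hNz]
    exact (lintegral_eq_zero_iff (P.measurable_coe hNm)).mp hz
  unfold dform
  refine integral_congr_ae ?_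
  filter_upwards [hfg, hPN] with x hx hPx
  have hae : f =ᵐ[P x] g :=
    ae_iff.mpr (measure_mono_null (subset_toMeasurable μ _) hPx)
  rw [hx, integral_congr_ae hae]

private lemma dform_center (hsnd : (μ ⊗ₘ P).snd = μ) {h : E → ℝ}
    (hsm : StronglyMeasurable h) (hh : MemLp h 2 μ) :
    dform μ (fun x => P x) (fun t => h t - ∫ z, h z ∂μ) = dform μ (fun x => P x) h := by
  obtain ⟨int1, int2, int3, -, aeint⟩ := core μ P hsnd hsm hh
  set m := ∫ z, h z ∂μ with hm
  have intA : Integrable (fun x => h x * (h x - ∫ y, h y ∂P x)) μ := by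
    have := (integrable_mul_of_memL2 hh hh).sub int3
    refine this.congr (Filter.Eventually.of_forall fun x => ?_)
    simp [mul_sub]
  have intB : Integrable (fun x => m * (h x - ∫ y, h y ∂P x)) μ :=
    ((hh.integrable one_le_two).sub int1).const_mul m
  have lhs_eq : dform μ (fun x => P x) (fun t => h t - m)
      = ∫ x, (h x * (h x - ∫ y, h y ∂P x) - m * (h x - ∫ y, h y ∂P x)) ∂μ := by
    unfold dform
    refine integral_congr_ae ?_
    filter_upwards [aeint] with x hx
    have hsub : ∫ y, (h y - m) ∂P x = (∫ y, h y ∂P x) - m := by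
      rw [integral_sub hx (integrable_const m), integral_const]
      simp [measure_univ]
    simp only [hsub]
    ring
  rw [lhs_eq, integral_sub intA intB, integral_const_mul,
    integral_sub (hh.integrable one_le_two) int1, int2]
  simp only [← hm, sub_self, mul_zero, sub_zero]
  rfl

end Reduction


/-- For a `μ`-reversible Markov kernel `Π` satisfying the uniform minorization
`Π(x, A) ≥ ε μ(A)`, the Dirichlet form satisfies `ε var_μ(f) ≤ E_Π(f) ≤ (2 - ε) var_μ(f)`,
and consequently `min{Gap(Π), Gap_L(Π)} ≥ ε`. -/
theorem minorization_dirichlet_and_gaps {E : Type*} [MeasurableSpace E]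
    (μ : Measure E) [IsProbabilityMeasure μ]
    (P : Kernel E E) [IsMarkovKernel P]
    (hrev : ∀ A B : Set E, MeasurableSet A → MeasurableSet B →
      ∫⁻ x in A, P x B ∂μ = ∫⁻ x in B, P x A ∂μ)
    (ε : ℝ) (hε : 0 < ε)
    (hmin : ∀ x : E, ∀ A : Set E, MeasurableSet A → ENNReal.ofReal ε * μ A ≤ P x A) :
    (∀ f : E → ℝ, MemLp f 2 μ →
      ε * varF μ f ≤ dform μ (fun x => P x) f ∧
      dform μ (fun x => P x) f ≤ (2 - ε) * varF μ f) ∧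
    ENNReal.ofReal ε ≤ min (gapE μ (fun x => P x)) (gapLE μ (fun x => P x)) := by
  have hsnd : (μ ⊗ₘ P).snd = μ := snd_eq μ P hrev
  -- ε ≤ 1
  have hne : Nonempty E := by
    by_contra hne
    rw [not_nonempty_iff] at hne
    have h1 : μ Set.univ = 1 := measure_univ
    rw [Set.univ_eq_empty_iff.mpr hne, measure_empty] at h1
    exact one_ne_zero h1.symm
  obtain ⟨x0⟩ := hne
  have hε1 : ε ≤ 1 := by
    have h1 := hmin x0 Set.univ MeasurableSet.univ
    rw [measure_univ, mul_one, measure_univ] at h1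
    rwa [ENNReal.ofReal_le_one] at h1
  -- part 1
  have part1 : ∀ f : E → ℝ, MemLp f 2 μ →
      ε * varF μ f ≤ dform μ (fun x => P x) f ∧
      dform μ (fun x => P x) f ≤ (2 - ε) * varF μ f := by
    intro f hf
    set g₀ : E → ℝ := hf.1.mk f with hg₀def
    have hg₀sm : StronglyMeasurable g₀ := hf.1.stronglyMeasurable_mk
    have hfg : f =ᵐ[μ] g₀ := hf.1.ae_eq_mk
    have hg₀ : MemLp g₀ 2 μ := hf.ae_eq hfg
    set m := ∫ z, g₀ z ∂μ with hm
    set g : E → ℝ := fun t => g₀ t - m with hgdef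
    have hgsm : StronglyMeasurable g := hg₀sm.sub stronglyMeasurable_const
    have hg : MemLp g 2 μ := hg₀.sub (memLp_const m)
    have intg₀ : Integrable g₀ μ := hg₀.integrable one_le_two
    have intg₀sq : Integrable (fun x => g₀ x ^ 2) μ := by
      simpa [sq] using integrable_mul_of_memL2 hg₀ hg₀
    have hg0 : ∫ x, g x ∂μ = 0 := by
      rw [hgdef]
      simp only
      rw [integral_sub intg₀ (integrable_const m), integral_const]
      simp [measure_univ, hm]
    -- variances
    have hvar_sq : ∫ x, g x ^ 2 ∂μ = (∫ x, g₀ x ^ 2 ∂μ) - m ^ 2 := by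
      have he : (fun x => g x ^ 2) = fun x => g₀ x ^ 2 - (2 * m) * g₀ x + m ^ 2 := by
        funext x; rw [hgdef]; ring
      have int_lin : Integrable (fun x => g₀ x ^ 2 - 2 * m * g₀ x) μ :=
        intg₀sq.sub (intg₀.const_mul (2 * m))
      have int_ml : Integrable (fun x => 2 * m * g₀ x) μ := intg₀.const_mul (2 * m)
      rw [he, integral_add int_lin (integrable_const _),
        integral_sub intg₀sq int_ml, integral_const_mul, integral_const]
      simp only [measure_univ, ENNReal.toReal_one, probReal_univ, smul_eq_mul, one_mul, ← hm]
      ring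
    have hvarf : varF μ f = ∫ x, g x ^ 2 ∂μ := by
      have e1 : ∫ x, f x ^ 2 ∂μ = ∫ x, g₀ x ^ 2 ∂μ :=
        integral_congr_ae (hfg.mono fun x hx => by simp [hx])
      have e2 : ∫ x, f x ∂μ = m := integral_congr_ae hfg
      unfold varF
      rw [e1, e2, hvar_sq]
    -- Dirichlet form
    have hdf : dform μ (fun x => P x) f = dform μ (fun x => P x) g := by
      rw [dform_congr_ae μ P hrev hfg, ← dform_center μ P hsnd hg₀sm hg₀]
    set S := ∫ x, g x ^ 2 ∂μ with hS
    set I := ∫ x, g x * ∫ y, g y ∂P x ∂μ with hI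
    have hsplit : dform μ (fun x => P x) g = S - I := dform_split μ P hsnd hgsm hg
    have hbound : |I| ≤ (1 - ε) * S := lemA μ P hsnd hε.le hε1 hmin hgsm hg hg0
    rw [hdf, hsplit, hvarf]
    obtain ⟨hb1, hb2⟩ := abs_le.mp hbound
    constructor <;> nlinarith
  refine ⟨part1, le_min ?_ ?_⟩
  · unfold gapE
    refine le_sInf ?_
    rintro r ⟨f, hf, hvar, rfl⟩
    have hd := (part1 f hf).1
    exact ENNReal.ofReal_le_ofReal ((le_div_iff₀ hvar).mpr (by linarith))
  · unfold gapLE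
    have h2e : ENNReal.ofReal (2 - ε) = 2 - ENNReal.ofReal ε := by
      rw [ENNReal.ofReal_sub _ hε.le]
      norm_num
    have hsup : sSup {r : ℝ≥0∞ | ∃ f : E → ℝ, MemLp f 2 μ ∧ 0 < varF μ f ∧
        r = ENNReal.ofReal (dform μ (fun x => P x) f / varF μ f)}
        ≤ 2 - ENNReal.ofReal ε := by
      refine sSup_le ?_
      rintro r ⟨f, hf, hvar, rfl⟩
      have hd := (part1 f hf).2
      calc ENNReal.ofReal (dform μ (fun x => P x) f / varF μ f)
          ≤ ENNReal.ofReal (2 - ε) :=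
            ENNReal.ofReal_le_ofReal ((div_le_iff₀ hvar).mpr (by linarith))
        _ = 2 - ENNReal.ofReal ε := h2e
    have hfin : ENNReal.ofReal ε ≤ 2 :=
      le_trans (ENNReal.ofReal_le_one.mpr hε1) one_le_two
    calc ENNReal.ofReal ε = 2 - (2 - ENNReal.ofReal ε) :=
          (ENNReal.sub_sub_cancel (by norm_num) hfin).symm
      _ ≤ 2 - sSup _ := tsub_le_tsub_left hsup 2
end

section
/- In the Metropolis-within-Gibbs setting, the kernel Φ_x(x₀,S) := ∫_Θ Π_θ(x₀,S) η(x₀,dθ) is reversible with respect to the marginal π_X; moreover, if for every θ ∈ Θ the kernel Π_θ is a positive operator on L²(X, ξ(θ,·)) (i.e. ∫∫ f(x)f(y) ξ(θ,dx) Π_θ(x,dy) ≥ 0 for all f ∈ L²(X,ξ(θ,·))), then Φ_x is a positive operator on L²(X,π_X), i.e. ∫∫ f(x)f(y) π_X(dx) Φ_x(x,dy) ≥ 0 for all f ∈ L²(X,π_X). -/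
open MeasureTheory ProbabilityTheory
open scoped ENNReal

variable {Θ X : Type*} [MeasurableSpace Θ] [MeasurableSpace X]

/-- The `X`-marginal chain kernel of the Metropolis-within-Gibbs sampler:
`Φ_x(x₀, S) = ∫_Θ Π_θ(x₀, S) η(x₀, dθ)`. -/
noncomputable def PhiX (η : Kernel X Θ) (Pk : Kernel (Θ × X) X) (x₀ : X) : Measure X :=
  (η x₀).bind (fun θ => Pk (θ, x₀))

private lemma memL2_iff_aux {α : Type*} [MeasurableSpace α] {μ : Measure α} {g : α → ℝ}
    (hg : AEStronglyMeasurable g μ) :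
    MemLp g 2 μ ↔ ∫⁻ y, (‖g y‖₊ : ℝ≥0∞) ^ (2 : ℝ) ∂μ < ∞ := by
  have h2 : ((2 : ℝ≥0∞)).toReal = (2 : ℝ) := by norm_num
  constructor
  · intro h
    have := h.2
    rw [eLpNorm_lt_top_iff_lintegral_rpow_enorm_lt_top (by norm_num) (by norm_num), h2] at this
    exact this
  · intro h
    refine ⟨hg, ?_⟩
    rw [eLpNorm_lt_top_iff_lintegral_rpow_enorm_lt_top (by norm_num) (by norm_num), h2]
    exact h

private lemma conj22 : Real.HolderConjugate 2 2 := Real.HolderConjugate.two_two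

/-- In the Metropolis-within-Gibbs setting, the kernel `Φ_x` is reversible with respect to the
marginal `π_X`, and it is a positive operator on `L²(X, π_X)` whenever every `Π_θ` is a
positive operator on `L²(X, ξ(θ, ·))`. -/
theorem mwg_phix_reversible_and_positive
    (π : Measure (Θ × X)) [IsProbabilityMeasure π]
    (ξ : Kernel Θ X) [IsMarkovKernel ξ] (η : Kernel X Θ) [IsMarkovKernel η]
    (hdis₁ : π = Measure.compProd π.fst ξ)
    (hdis₂ : π = (Measure.compProd π.snd η).map Prod.swap)
    (Pk : Kernel (Θ × X) X) [IsMarkovKernel Pk]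
    (hrev : ∀ θ : Θ, ∀ A B : Set X, MeasurableSet A → MeasurableSet B →
      ∫⁻ x in A, Pk (θ, x) B ∂(ξ θ) = ∫⁻ x in B, Pk (θ, x) A ∂(ξ θ)) :
    (∀ A B : Set X, MeasurableSet A → MeasurableSet B →
      ∫⁻ x in A, PhiX η Pk x B ∂π.snd = ∫⁻ x in B, PhiX η Pk x A ∂π.snd) ∧
    ((∀ θ : Θ, ∀ f : X → ℝ, MemLp f 2 (ξ θ) →
        0 ≤ ∫ x, f x * ∫ y, f y ∂(Pk (θ, x)) ∂(ξ θ)) →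
      ∀ f : X → ℝ, MemLp f 2 π.snd →
        0 ≤ ∫ x, f x * ∫ y, f y ∂(PhiX η Pk x) ∂π.snd) := by
  -- basic measurability facts
  have hPkmx : ∀ x : X, Measurable fun θ => Pk (θ, x) :=
    fun x => Pk.measurable.comp (measurable_id.prodMk measurable_const)
  -- the lintegral of a function against `PhiX`
  have hPhiL : ∀ (x : X) (q : X → ℝ≥0∞), Measurable q →
      ∫⁻ y, q y ∂(PhiX η Pk x) = ∫⁻ θ, ∫⁻ y, q y ∂(Pk (θ, x)) ∂(η x) := by
    intro x q hq
    exact Measure.lintegral_bind (hPkmx x).aemeasurable hq.aemeasurable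
  have hPhiApp : ∀ (x : X) {N : Set X}, MeasurableSet N →
      PhiX η Pk x N = ∫⁻ θ, Pk (θ, x) N ∂(η x) := by
    intro x N hN
    exact Measure.bind_apply hN (hPkmx x).aemeasurable
  -- `PhiX` is a Markov family
  have hPhiProb : ∀ x : X, IsProbabilityMeasure (PhiX η Pk x) := by
    intro x
    constructor
    rw [hPhiApp x MeasurableSet.univ]
    simp
  -- key exchange identity for double lintegrals
  have h1 : ∀ F : Θ × X → ℝ≥0∞, Measurable F →
      ∫⁻ x, ∫⁻ θ, F (θ, x) ∂(η x) ∂π.snd = ∫⁻ θ, ∫⁻ x, F (θ, x) ∂(ξ θ) ∂π.fst := by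
    intro F hF
    have hFswap : Measurable fun p : X × Θ => F p.swap := hF.comp measurable_swap
    have h₂ : ∫⁻ p : X × Θ, F p.swap ∂(π.snd ⊗ₘ η)
        = ∫⁻ x, ∫⁻ θ, F (θ, x) ∂(η x) ∂π.snd :=
      Measure.lintegral_compProd hFswap
    have h₃ : ∫⁻ p : X × Θ, F p.swap ∂(π.snd ⊗ₘ η) = ∫⁻ p, F p ∂π := by
      conv_rhs => rw [hdis₂]
      rw [lintegral_map hF measurable_swap]
    rw [← h₂, h₃]
    conv_lhs => rw [hdis₁]
    exact Measure.lintegral_compProd hF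
  -- invariance of each `ξ θ` under `Pk (θ, ·)`
  have hbind : ∀ θ : Θ, (ξ θ).bind (fun x => Pk (θ, x)) = ξ θ := by
    intro θ
    have hm : Measurable fun x : X => Pk (θ, x) :=
      Pk.measurable.comp (measurable_const.prodMk measurable_id)
    ext N hN
    rw [Measure.bind_apply hN hm.aemeasurable]
    have := hrev θ Set.univ N MeasurableSet.univ hN
    rw [Measure.restrict_univ] at this
    rw [this]
    simp
  have hinvθ : ∀ θ : Θ, ∀ q : X → ℝ≥0∞, Measurable q →
      ∫⁻ x, ∫⁻ y, q y ∂(Pk (θ, x)) ∂(ξ θ) = ∫⁻ y, q y ∂(ξ θ) := by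
    intro θ q hq
    have hm : Measurable fun x : X => Pk (θ, x) :=
      Pk.measurable.comp (measurable_const.prodMk measurable_id)
    conv_rhs => rw [← hbind θ]
    rw [Measure.lintegral_bind hm.aemeasurable hq.aemeasurable]
  -- the marginal identity
  have hmarg : ∀ q : X → ℝ≥0∞, Measurable q →
      ∫⁻ θ, ∫⁻ x, q x ∂(ξ θ) ∂π.fst = ∫⁻ x, q x ∂π.snd := by
    intro q hq
    rw [Measure.snd, lintegral_map hq measurable_snd]
    conv_rhs => rw [hdis₁]
    exact (Measure.lintegral_compProd (hq.comp measurable_snd)).symm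
  -- key identity for set lintegrals of `PhiX`
  have key : ∀ A B : Set X, MeasurableSet A → MeasurableSet B →
      ∫⁻ x in A, PhiX η Pk x B ∂π.snd
        = ∫⁻ θ, ∫⁻ x in A, Pk (θ, x) B ∂(ξ θ) ∂π.fst := by
    intro A B hA hB
    have hmeas : Measurable fun p : Θ × X => Pk p B * A.indicator 1 p.2 :=
      (Pk.measurable_coe hB).mul ((measurable_one.indicator hA).comp measurable_snd)
    have hind : ∀ (μ : Measure X) (h : X → ℝ≥0∞), Measurable h →
        ∫⁻ x in A, h x ∂μ = ∫⁻ x, h x * A.indicator 1 x ∂μ := by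
      intro μ h hh
      rw [← lintegral_indicator hA]
      congr 1
      ext x
      by_cases hx : x ∈ A <;> simp [hx]
    have hPhimeas : Measurable fun x => PhiX η Pk x B := by
      have : (fun x => PhiX η Pk x B) = fun x => ∫⁻ θ, Pk (θ, x) B ∂(η x) := by
        funext x; exact hPhiApp x hB
      rw [this]
      exact Measurable.lintegral_kernel_prod_right'
        (f := fun p : X × Θ => Pk (p.2, p.1) B) ((Pk.measurable_coe hB).comp measurable_swap)
    rw [hind _ _ hPhimeas]
    have step : ∀ x, PhiX η Pk x B * A.indicator 1 x
        = ∫⁻ θ, Pk (θ, x) B * A.indicator 1 x ∂(η x) := by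
      intro x
      have hm : Measurable fun θ : Θ => Pk (θ, x) B :=
        (Pk.measurable_coe hB).comp (measurable_id.prodMk measurable_const)
      rw [hPhiApp x hB, lintegral_mul_const _ hm]
    simp_rw [step]
    rw [h1 _ hmeas]
    refine lintegral_congr fun θ => ?_
    have hm : Measurable fun x : X => Pk (θ, x) B :=
      (Pk.measurable_coe hB).comp (measurable_const.prodMk measurable_id)
    rw [hind (ξ θ) _ hm]
  -- generic measurability of `x ↦ ∫⁻ y, q y ∂(PhiX x)`
  have hQPkgen : ∀ q : X → ℝ≥0∞, Measurable q →
      Measurable fun p : Θ × X => ∫⁻ y, q y ∂(Pk p) := by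
    intro q hq
    exact Measurable.lintegral_kernel_prod_right'
      (f := fun r : (Θ × X) × X => q r.2) (hq.comp measurable_snd)
  have hPhiLmeas : ∀ q : X → ℝ≥0∞, Measurable q →
      Measurable fun x => ∫⁻ y, q y ∂(PhiX η Pk x) := by
    intro q hq
    have heq : (fun x => ∫⁻ y, q y ∂(PhiX η Pk x))
        = fun x => ∫⁻ θ, ∫⁻ y, q y ∂(Pk (θ, x)) ∂(η x) := funext fun x => hPhiL x q hq
    rw [heq]
    exact Measurable.lintegral_kernel_prod_right'
      (f := fun p : X × Θ => ∫⁻ y, q y ∂(Pk (p.2, p.1)))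
      ((hQPkgen q hq).comp measurable_swap)
  -- invariance of `π.snd` under `PhiX`
  have hinvL : ∀ q : X → ℝ≥0∞, Measurable q →
      ∫⁻ x, ∫⁻ y, q y ∂(PhiX η Pk x) ∂π.snd = ∫⁻ y, q y ∂π.snd := by
    intro q hq
    calc ∫⁻ x, ∫⁻ y, q y ∂(PhiX η Pk x) ∂π.snd
        = ∫⁻ x, ∫⁻ θ, ∫⁻ y, q y ∂(Pk (θ, x)) ∂(η x) ∂π.snd :=
          lintegral_congr fun x => hPhiL x q hq
      _ = ∫⁻ θ, ∫⁻ x, ∫⁻ y, q y ∂(Pk (θ, x)) ∂(ξ θ) ∂π.fst := h1 _ (hQPkgen q hq)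
      _ = ∫⁻ θ, ∫⁻ x, q x ∂(ξ θ) ∂π.fst := lintegral_congr fun θ => hinvθ θ q hq
      _ = ∫⁻ y, q y ∂π.snd := hmarg q hq
  refine ⟨fun A B hA hB => ?_, ?_⟩
  · rw [key A B hA hB, key B A hB hA]
    exact lintegral_congr fun θ => hrev θ A B hA hB
  intro hpos f hf
  -- measurable representative
  set g := hf.1.mk f with hgdef
  have hgsm : StronglyMeasurable g := hf.1.stronglyMeasurable_mk
  have hgm : Measurable g := hgsm.measurable
  have hfg : f =ᵐ[π.snd] g := hf.1.ae_eq_mk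
  have hg2 : MemLp g 2 π.snd := hf.ae_eq hfg
  -- the squared norm function
  set Q : X → ℝ≥0∞ := fun y => (‖g y‖₊ : ℝ≥0∞) ^ (2 : ℝ) with hQdef
  have hQm : Measurable Q := hgm.enorm.pow_const _
  have hQfin : ∫⁻ y, Q y ∂π.snd < ∞ := (memL2_iff_aux hg2.1).mp hg2
  have hQPk : Measurable fun p : Θ × X => ∫⁻ y, Q y ∂(Pk p) := hQPkgen Q hQm
  -- a.e. θ, g ∈ L²(ξ θ)
  have hmargQ : ∫⁻ θ, ∫⁻ x, Q x ∂(ξ θ) ∂π.fst < ∞ := by rw [hmarg Q hQm]; exact hQfin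
  have hmeasξQ : Measurable fun θ => ∫⁻ x, Q x ∂(ξ θ) :=
    Measurable.lintegral_kernel_prod_right'
      (f := fun p : Θ × X => Q p.2) (hQm.comp measurable_snd)
  have haeθ : ∀ᵐ θ ∂π.fst, MemLp g 2 (ξ θ) := by
    filter_upwards [ae_lt_top hmeasξQ hmargQ.ne] with θ hθ
    exact (memL2_iff_aux hgsm.aestronglyMeasurable).mpr hθ
  -- a.e. x, g integrable w.r.t. `PhiX x`
  have haeInt : ∀ᵐ x ∂π.snd, Integrable g (PhiX η Pk x) := by
    have hfin : ∫⁻ x, ∫⁻ y, Q y ∂(PhiX η Pk x) ∂π.snd ≠ ∞ := by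
      rw [hinvL Q hQm]; exact hQfin.ne
    filter_upwards [ae_lt_top (hPhiLmeas Q hQm) hfin] with x hx
    haveI := hPhiProb x
    exact ((memL2_iff_aux hgsm.aestronglyMeasurable).mpr hx).integrable one_le_two
  -- a.e. x, f = g a.e. w.r.t. `PhiX x`
  have hae_fg : ∀ᵐ x ∂π.snd, f =ᵐ[PhiX η Pk x] g := by
    obtain ⟨N, hNsub, hNm, hN0⟩ := exists_measurable_superset_of_null (ae_iff.mp hfg)
    have h0 : ∫⁻ x, PhiX η Pk x N ∂π.snd = 0 := by
      have heq : ∀ x, PhiX η Pk x N = ∫⁻ y, N.indicator 1 y ∂(PhiX η Pk x) := by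
        intro x
        rw [lintegral_indicator hNm]
        simp
      simp_rw [heq]
      rw [hinvL _ ((measurable_one.indicator hNm))]
      rw [lintegral_indicator hNm]
      simpa using hN0
    have hPhimeasN : Measurable fun x => PhiX η Pk x N := by
      have heq : (fun x => PhiX η Pk x N)
          = fun x => ∫⁻ y, N.indicator 1 y ∂(PhiX η Pk x) := by
        funext x
        rw [lintegral_indicator hNm]
        simp
      rw [heq]
      exact hPhiLmeas _ (measurable_one.indicator hNm)
    filter_upwards [(lintegral_eq_zero_iff hPhimeasN).mp h0] with x hx
    exact ae_iff.mpr (measure_mono_null hNsub hx)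
  -- the integral of g against the inner kernel
  set J : Θ × X → ℝ := fun p => ∫ y, g y ∂(Pk p) with hJdef
  have hJsm : StronglyMeasurable J :=
    StronglyMeasurable.integral_kernel_prod_right' (κ := Pk)
      (f := fun r : (Θ × X) × X => g r.2) (hgsm.comp_measurable measurable_snd)
  set G : Θ × X → ℝ := fun p => g p.2 * J p with hGdef
  have hGsm : StronglyMeasurable G := (hgsm.comp_measurable measurable_snd).mul hJsm
  -- pointwise Cauchy-Schwarz bound
  have hJbound : ∀ p : Θ × X, (‖J p‖₊ : ℝ≥0∞) ≤ (∫⁻ y, Q y ∂(Pk p)) ^ (1 / 2 : ℝ) := by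
    intro p
    calc (‖J p‖₊ : ℝ≥0∞) ≤ ∫⁻ y, (‖g y‖₊ : ℝ≥0∞) ∂(Pk p) :=
          enorm_integral_le_lintegral_enorm _
      _ = ∫⁻ y, ((fun y : X => (‖g y‖₊ : ℝ≥0∞)) * fun _ : X => (1 : ℝ≥0∞)) y ∂(Pk p) := by
          simp
      _ ≤ (∫⁻ y, (‖g y‖₊ : ℝ≥0∞) ^ (2 : ℝ) ∂(Pk p)) ^ (1 / 2 : ℝ)
            * (∫⁻ y, (1 : ℝ≥0∞) ^ (2 : ℝ) ∂(Pk p)) ^ (1 / 2 : ℝ) :=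
          ENNReal.lintegral_mul_le_Lp_mul_Lq _ conj22 hgm.enorm.aemeasurable
            aemeasurable_const
      _ = (∫⁻ y, Q y ∂(Pk p)) ^ (1 / 2 : ℝ) := by
          simp [hQdef]
  -- integrability of G with respect to π
  have hfac2 : ∫⁻ p, ∫⁻ y, Q y ∂(Pk p) ∂π = ∫⁻ y, Q y ∂π.snd := by
    conv_lhs => rw [hdis₁]
    rw [Measure.lintegral_compProd hQPk]
    rw [lintegral_congr fun θ => hinvθ θ Q hQm]
    exact hmarg Q hQm
  have hfac1 : ∫⁻ p : Θ × X, Q p.2 ∂π = ∫⁻ y, Q y ∂π.snd := by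
    rw [Measure.snd, lintegral_map hQm measurable_snd]
  have hGint : Integrable G π := by
    refine ⟨hGsm.aestronglyMeasurable, ?_⟩
    rw [hasFiniteIntegral_def]
    have hptw : ∀ p : Θ × X, (‖G p‖₊ : ℝ≥0∞)
        ≤ ((fun p : Θ × X => (‖g p.2‖₊ : ℝ≥0∞))
            * fun p : Θ × X => (∫⁻ y, Q y ∂(Pk p)) ^ (1 / 2 : ℝ)) p := by
      intro p
      have hGe : (‖G p‖₊ : ℝ≥0∞) = (‖g p.2‖₊ : ℝ≥0∞) * (‖J p‖₊ : ℝ≥0∞) := by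
        simp [hGdef, nnnorm_mul, ENNReal.coe_mul]
      calc (‖G p‖₊ : ℝ≥0∞) = (‖g p.2‖₊ : ℝ≥0∞) * (‖J p‖₊ : ℝ≥0∞) := hGe
        _ ≤ (‖g p.2‖₊ : ℝ≥0∞) * (∫⁻ y, Q y ∂(Pk p)) ^ (1 / 2 : ℝ) :=
            mul_le_mul_right (hJbound p) _
    have hb : ∫⁻ p, (‖G p‖₊ : ℝ≥0∞) ∂π
        ≤ (∫⁻ y, Q y ∂π.snd) ^ (1 / 2 : ℝ) * (∫⁻ y, Q y ∂π.snd) ^ (1 / 2 : ℝ) := by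
      calc ∫⁻ p, (‖G p‖₊ : ℝ≥0∞) ∂π
          ≤ ∫⁻ p, ((fun p : Θ × X => (‖g p.2‖₊ : ℝ≥0∞))
              * fun p : Θ × X => (∫⁻ y, Q y ∂(Pk p)) ^ (1 / 2 : ℝ)) p ∂π :=
            lintegral_mono hptw
        _ ≤ (∫⁻ p : Θ × X, (‖g p.2‖₊ : ℝ≥0∞) ^ (2 : ℝ) ∂π) ^ (1 / 2 : ℝ)
              * (∫⁻ p, ((∫⁻ y, Q y ∂(Pk p)) ^ (1 / 2 : ℝ)) ^ (2 : ℝ) ∂π) ^ (1 / 2 : ℝ) :=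
            ENNReal.lintegral_mul_le_Lp_mul_Lq _ conj22
              ((hgm.comp measurable_snd).enorm.aemeasurable)
              ((hQPk.pow_const _).aemeasurable)
        _ = (∫⁻ y, Q y ∂π.snd) ^ (1 / 2 : ℝ) * (∫⁻ y, Q y ∂π.snd) ^ (1 / 2 : ℝ) := by
            have e1 : ∫⁻ p : Θ × X, (‖g p.2‖₊ : ℝ≥0∞) ^ (2 : ℝ) ∂π
                = ∫⁻ p : Θ × X, Q p.2 ∂π := by simp only [hQdef]
            have e2 : ∫⁻ p, ((∫⁻ y, Q y ∂(Pk p)) ^ (1 / 2 : ℝ)) ^ (2 : ℝ) ∂π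
                = ∫⁻ p, ∫⁻ y, Q y ∂(Pk p) ∂π := by
              refine lintegral_congr fun p => ?_
              rw [← ENNReal.rpow_mul]
              norm_num
            rw [e1, hfac1, e2, hfac2]
    refine lt_of_le_of_lt hb (ENNReal.mul_lt_top ?_ ?_) <;>
      exact ENNReal.rpow_lt_top_of_nonneg (by norm_num) hQfin.ne
  -- integrability on the swapped product
  have hswap : Integrable (fun p : X × Θ => G p.swap) (π.snd ⊗ₘ η) := by
    have h' : Integrable G ((π.snd ⊗ₘ η).map Prod.swap) := by rw [← hdis₂]; exact hGint
    exact (integrable_map_measure h'.aestronglyMeasurable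
      measurable_swap.aemeasurable).mp h'
  -- the integral of g against PhiX, a.e.
  have hPhiInt : ∀ x : X, Integrable g (PhiX η Pk x) →
      ∫ y, g y ∂(PhiX η Pk x) = ∫ θ, J (θ, x) ∂(η x) := by
    intro x hx
    have hmx : Measurable fun θ : Θ => (θ, x) := measurable_id.prodMk measurable_const
    set κx : Kernel Θ X := Pk.comap (fun θ => (θ, x)) hmx with hκx
    have hPhieq : PhiX η Pk x = ((η x) ⊗ₘ κx).map Prod.snd := by
      ext N hN
      rw [Measure.map_apply measurable_snd hN,
        Measure.compProd_apply (measurable_snd hN), hPhiApp x hN]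
      refine lintegral_congr fun θ => ?_
      rw [Kernel.comap_apply]
      congr 1
    have hx' : Integrable (fun p : Θ × X => g p.2) ((η x) ⊗ₘ κx) := by
      rw [hPhieq] at hx
      exact (integrable_map_measure hx.aestronglyMeasurable
        measurable_snd.aemeasurable).mp hx
    rw [hPhieq, integral_map measurable_snd.aemeasurable hgsm.aestronglyMeasurable,
      Measure.integral_compProd hx']
    refine integral_congr_ae (Filter.Eventually.of_forall fun θ => ?_)
    simp only [hκx, hJdef, Kernel.comap_apply]
  -- main chain of equalities
  have hchain : ∫ x, g x * ∫ y, g y ∂(PhiX η Pk x) ∂π.snd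
      = ∫ θ, ∫ x, G (θ, x) ∂(ξ θ) ∂π.fst := by
    calc ∫ x, g x * ∫ y, g y ∂(PhiX η Pk x) ∂π.snd
        = ∫ x, ∫ θ, G (θ, x) ∂(η x) ∂π.snd := by
          refine integral_congr_ae ?_
          filter_upwards [haeInt] with x hx
          rw [hPhiInt x hx, ← integral_const_mul]
      _ = ∫ p : X × Θ, G p.swap ∂(π.snd ⊗ₘ η) := (Measure.integral_compProd hswap).symm
      _ = ∫ p, G p ∂π := by
          conv_rhs => rw [hdis₂]
          rw [integral_map measurable_swap.aemeasurable hGsm.aestronglyMeasurable]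
      _ = ∫ θ, ∫ x, G (θ, x) ∂(ξ θ) ∂π.fst := by
          conv_lhs => rw [hdis₁]
          exact Measure.integral_compProd (by rw [← hdis₁]; exact hGint)
  have hfinal : 0 ≤ ∫ θ, ∫ x, G (θ, x) ∂(ξ θ) ∂π.fst := by
    refine integral_nonneg_of_ae ?_
    filter_upwards [haeθ] with θ hθ
    have hp := hpos θ g hθ
    simpa [hGdef, hJdef] using hp
  have hcongr : ∫ x, f x * ∫ y, f y ∂(PhiX η Pk x) ∂π.snd
      = ∫ x, g x * ∫ y, g y ∂(PhiX η Pk x) ∂π.snd := by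
    refine integral_congr_ae ?_
    filter_upwards [hfg, hae_fg] with x h1' h2'
    rw [h1', integral_congr_ae h2']
  rw [hcongr, hchain]
  exact hfinal
end
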